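/- arXiv:1905.10031 — 5 statements merged into one kernel-verified Lean document; each statement's English description precedes it below -/
import Mathlib

section
/- Let P and Q be probability distributions on the same discrete alphabet Σ. For δ ∈ [0,1/2], define the mixtures P(δ) := (1/2+δ)P + (1/2−δ)Q and Q(δ) := (1/2−δ)P + (1/2+δ)Q. Then for any δ′ ∈ (0,1/2] with δ ≤ δ′, one has SKL(P(δ), Q(δ)) ≤ (δ/δ′)² · SKL(P(δ′), Q(δ′)). In particular, SKL(P(δ), Q(δ)) ≤ 4δ² · SKL(P, Q). -/
open scoped BigOperators ENNReal

/-- The `a`-th term of the symmetrized KL divergence `(x - y) * (log x - log y)`,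
valued in `ℝ≥0∞`, with the convention that the term is `∞` when exactly one of the
two masses vanishes. -/
noncomputable def sklTerm (x y : ℝ) : ℝ≥0∞ :=
  if (x = 0) ↔ (y = 0) then ENNReal.ofReal ((x - y) * (Real.log x - Real.log y)) else ⊤

/-- Symmetrized Kullback-Leibler divergence `SKL(P,Q) = KL(P,Q) + KL(Q,P)` between
two probability mass functions on a discrete alphabet. -/
noncomputable def SKL {α : Type*} (P Q : α → ℝ) : ℝ≥0∞ := ∑' a, sklTerm (P a) (Q a)

/-- `P` is a probability mass function. -/
def IsPMF {α : Type*} (P : α → ℝ) : Prop := (∀ a, 0 ≤ P a) ∧ (∑' a, P a) = 1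


noncomputable def Lg (t : ℝ) : ℝ := Real.log (1+t) - Real.log (1-t)

lemma psi_mono : MonotoneOn (fun t : ℝ => 2*t/(1-t^2) - Lg t) (Set.Ico 0 1) := by
  have hint : interior (Set.Ico (0:ℝ) 1) = Set.Ioo 0 1 := interior_Ico
  have hderiv : ∀ t ∈ Set.Ioo (0:ℝ) 1,
      HasDerivAt (fun t : ℝ => 2*t/(1-t^2) - Lg t) (4*t^2/(1-t^2)^2) t := by
    intro t ht
    obtain ⟨ht0, ht1⟩ := ht
    have h1 : (0:ℝ) < 1 + t := by linarith
    have h2 : (0:ℝ) < 1 - t := by linarith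
    have h3 : (1:ℝ) - t^2 ≠ 0 := by nlinarith
    have d1 : HasDerivAt (fun t : ℝ => 2*t/(1-t^2))
        ((2*(1-t^2) - 2*t*(-(2*t)))/(1-t^2)^2) t := by
      exact (((hasDerivAt_id t).const_mul 2).div
        (((hasDerivAt_pow 2 t).const_sub 1)) h3).congr_deriv (by simp only [id_eq]; ring)
    have d2 : HasDerivAt (fun t : ℝ => Real.log (1+t)) (1/(1+t)) t := by
      simpa [Function.comp_def] using ((Real.hasDerivAt_log h1.ne').comp t ((hasDerivAt_id t).const_add 1))
    have d3 : HasDerivAt (fun t : ℝ => Real.log (1-t)) (-(1/(1-t))) t := by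
      have := (Real.hasDerivAt_log h2.ne').comp t ((hasDerivAt_id t).const_sub 1)
      simpa [Function.comp_def] using this
    simp only [Lg]
    have := d1.sub (d2.sub d3)
    exact this.congr_deriv (by field_simp [h1.ne', h2.ne']; ring)
  apply monotoneOn_of_deriv_nonneg (convex_Ico 0 1)
  · apply ContinuousOn.sub
    · apply ContinuousOn.div (by fun_prop)
      · fun_prop
      · intro t ht; obtain ⟨h0, h1⟩ := ht; nlinarith
    · apply ContinuousOn.sub
      · apply Real.continuousOn_log.comp (by fun_prop)
        intro t ht; obtain ⟨h0, h1⟩ := ht; simp; intro h; linarith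
      · apply Real.continuousOn_log.comp (by fun_prop)
        intro t ht; obtain ⟨h0, h1⟩ := ht; simp; intro h; linarith
  · rw [hint]; intro t ht; exact (hderiv t ht).differentiableAt.differentiableWithinAt
  · rw [hint]; intro t ht
    rw [(hderiv t ht).deriv]
    positivity

lemma lemA {t : ℝ} (h0 : 0 ≤ t) (h1 : t < 1) : Lg t ≤ 2*t/(1-t^2) := by
  have := psi_mono (Set.mem_Ico.2 ⟨le_refl 0, one_pos⟩) (Set.mem_Ico.2 ⟨h0, h1⟩) h0
  simp only [Lg] at this ⊢
  norm_num at this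
  linarith

lemma phi_mono : MonotoneOn (fun t : ℝ => Lg t / t) (Set.Ioo 0 1) := by
  have hint : interior (Set.Ioo (0:ℝ) 1) = Set.Ioo 0 1 := interior_Ioo
  have hderiv : ∀ t ∈ Set.Ioo (0:ℝ) 1,
      HasDerivAt (fun t : ℝ => Lg t / t) (((1/(1+t) + 1/(1-t))*t - Lg t)/t^2) t := by
    intro t ht
    obtain ⟨ht0, ht1⟩ := ht
    have h1 : (0:ℝ) < 1 + t := by linarith
    have h2 : (0:ℝ) < 1 - t := by linarith
    have d2 : HasDerivAt (fun t : ℝ => Real.log (1+t)) (1/(1+t)) t := by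
      simpa [Function.comp_def] using ((Real.hasDerivAt_log h1.ne').comp t ((hasDerivAt_id t).const_add 1))
    have d3 : HasDerivAt (fun t : ℝ => Real.log (1-t)) (-(1/(1-t))) t := by
      simpa [Function.comp_def] using ((Real.hasDerivAt_log h2.ne').comp t ((hasDerivAt_id t).const_sub 1))
    have dN : HasDerivAt Lg (1/(1+t) + 1/(1-t)) t := by
      exact (d2.sub d3).congr_deriv (by ring)
    have := dN.div (hasDerivAt_id t) ht0.ne'
    exact this.congr_deriv (by simp)
  apply monotoneOn_of_deriv_nonneg (convex_Ioo 0 1)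
  · intro t ht
    exact (hderiv t ht).continuousAt.continuousWithinAt
  · rw [hint]; intro t ht; exact (hderiv t ht).differentiableAt.differentiableWithinAt
  · rw [hint]; intro t ht
    obtain ⟨ht0, ht1⟩ := ht
    rw [(hderiv t ⟨ht0, ht1⟩).deriv]
    have h1 : (0:ℝ) < 1 + t := by linarith
    have h2 : (0:ℝ) < 1 - t := by linarith
    have key : Lg t ≤ (1/(1+t) + 1/(1-t))*t := by
      have := lemA ht0.le ht1
      have h3 : (1:ℝ)-t^2 ≠ 0 := by nlinarith
      have heq : (1/(1+t) + 1/(1-t))*t = 2*t/(1-t^2) := by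
        field_simp; ring
      linarith [heq ▸ this]
    apply div_nonneg (by linarith) (by positivity)

lemma lemB {t t' : ℝ} (ht : 0 < t) (h : t ≤ t') (ht' : t' < 1) :
    t' * Lg t ≤ t * Lg t' := by
  have h1 := phi_mono (Set.mem_Ioo.2 ⟨ht, lt_of_le_of_lt h ht'⟩)
    (Set.mem_Ioo.2 ⟨lt_of_lt_of_le ht h, ht'⟩) h
  have ht'0 : 0 < t' := lt_of_lt_of_le ht h
  rw [div_le_div_iff₀ ht ht'0] at h1
  linarith

lemma log_eq_Lg {c u : ℝ} (hc : 0 < c) (h1 : 0 < c + u) (h2 : 0 < c - u) :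
    Real.log (c+u) - Real.log (c-u) = Lg (u/c) := by
  have e1 : 1 + u/c = (c+u)/c := by field_simp
  have e2 : 1 - u/c = (c-u)/c := by field_simp
  rw [Lg, e1, e2, Real.log_div h1.ne' hc.ne', Real.log_div h2.ne' hc.ne']
  ring

lemma key_pos {c d δ δ' : ℝ} (hc : 0 < c) (hδ : 0 < δ) (hδδ' : δ ≤ δ') (hd : 0 < d)
    (h2 : 0 < c - δ'*d) :
    2*δ*d*(Real.log (c+δ*d) - Real.log (c-δ*d))
      ≤ (δ/δ')^2 * (2*δ'*d*(Real.log (c+δ'*d) - Real.log (c-δ'*d))) := by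
  have hδ'0 : 0 < δ' := lt_of_lt_of_le hδ hδδ'
  have hx : 0 < c + δ*d := by positivity
  have hx' : 0 < c + δ'*d := by positivity
  have hy : 0 < c - δ*d := by nlinarith
  have ht0 : 0 < δ*d/c := by positivity
  have htt' : δ*d/c ≤ δ'*d/c := by
    apply div_le_div_of_nonneg_right _ hc.le
    nlinarith
  have ht'1 : δ'*d/c < 1 := by rw [div_lt_one hc]; linarith
  have hB := lemB ht0 htt' ht'1
  rw [log_eq_Lg hc hx hy, log_eq_Lg hc hx' h2]
  set A := Lg (δ*d/c)
  set B := Lg (δ'*d/c)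
  have h5 : δ'*d*A ≤ δ*d*B := by
    have h6 := mul_le_mul_of_nonneg_left hB hc.le
    calc δ'*d*A = c * (δ'*d/c * A) := by field_simp
    _ ≤ c * (δ*d/c * B) := h6
    _ = δ*d*B := by field_simp
  calc 2*δ*d*A = (2*δ/δ') * (δ'*d*A) := by field_simp
  _ ≤ (2*δ/δ') * (δ*d*B) := by
      apply mul_le_mul_of_nonneg_left h5 (by positivity)
  _ = (δ/δ')^2 * (2*δ'*d*B) := by field_simp

lemma key {c d δ δ' : ℝ} (hc : 0 < c) (hδ : 0 < δ) (hδδ' : δ ≤ δ')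
    (h1 : 0 < c + δ'*d) (h2 : 0 < c - δ'*d) :
    2*δ*d*(Real.log (c+δ*d) - Real.log (c-δ*d))
      ≤ (δ/δ')^2 * (2*δ'*d*(Real.log (c+δ'*d) - Real.log (c-δ'*d))) := by
  rcases lt_trichotomy d 0 with hd | hd | hd
  · have h := key_pos hc hδ hδδ' (neg_pos.2 hd) (by linarith : 0 < c - δ'*(-d))
    rw [show c + δ*(-d) = c - δ*d by ring, show c - δ*(-d) = c + δ*d by ring,
      show c + δ'*(-d) = c - δ'*d by ring, show c - δ'*(-d) = c + δ'*d by ring] at h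
    nlinarith [h]
  · simp [hd]
  · exact key_pos hc hδ hδδ' hd h2

lemma term_le {p q δ δ' : ℝ} (hp : 0 ≤ p) (hq : 0 ≤ q) (hδ0 : 0 ≤ δ)
    (hδ'0 : 0 < δ') (hδ' : δ' ≤ 1/2) (hle : δ ≤ δ') :
    sklTerm ((1/2+δ)*p + (1/2-δ)*q) ((1/2-δ)*p + (1/2+δ)*q)
      ≤ ENNReal.ofReal ((δ/δ')^2) *
        sklTerm ((1/2+δ')*p + (1/2-δ')*q) ((1/2-δ')*p + (1/2+δ')*q) := by
  rcases eq_or_lt_of_le hδ0 with h0 | hδpos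
  · have hxy : ((1:ℝ)/2+δ)*p + (1/2-δ)*q = (1/2-δ)*p + (1/2+δ)*q := by
      rw [← h0]; ring
    rw [hxy]
    have h1 : sklTerm ((1/2-δ)*p + (1/2+δ)*q) ((1/2-δ)*p + (1/2+δ)*q) = 0 := by
      simp [sklTerm]
    rw [h1]
    exact zero_le
  by_cases hs : p + q = 0
  · have hp0 : p = 0 := by linarith
    have hq0 : q = 0 := by linarith
    have h1 : sklTerm ((1/2+δ)*p + (1/2-δ)*q) ((1/2-δ)*p + (1/2+δ)*q) = 0 := by
      simp [sklTerm, hp0, hq0]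
    rw [h1]
    exact zero_le
  have hspos : 0 < p + q := lt_of_le_of_ne (by linarith) (Ne.symm hs)
  set x' := (1/2+δ')*p + (1/2-δ')*q with hx'def
  set y' := (1/2-δ')*p + (1/2+δ')*q with hy'def
  have hx'0 : 0 ≤ x' := by
    have h1 := mul_nonneg (by linarith : (0:ℝ) ≤ 1/2+δ') hp
    have h2 := mul_nonneg (by linarith : (0:ℝ) ≤ 1/2-δ') hq
    rw [hx'def]; linarith
  have hy'0 : 0 ≤ y' := by
    have h1 := mul_nonneg (by linarith : (0:ℝ) ≤ 1/2-δ') hp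
    have h2 := mul_nonneg (by linarith : (0:ℝ) ≤ 1/2+δ') hq
    rw [hy'def]; linarith
  have hsum : x' + y' = p + q := by rw [hx'def, hy'def]; ring
  by_cases hpos : 0 < x' ∧ 0 < y'
  · obtain ⟨hx', hy'⟩ := hpos
    set c := (p+q)/2 with hcdef
    set d := p - q with hddef
    have hc : 0 < c := by rw [hcdef]; linarith
    have ex' : x' = c + δ'*d := by rw [hx'def, hcdef, hddef]; ring
    have ey' : y' = c - δ'*d := by rw [hy'def, hcdef, hddef]; ring
    have hx'c : 0 < c + δ'*d := ex' ▸ hx'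
    have hy'c : 0 < c - δ'*d := ey' ▸ hy'
    have ex : ((1:ℝ)/2+δ)*p + (1/2-δ)*q = c + δ*d := by rw [hcdef, hddef]; ring
    have ey : ((1:ℝ)/2-δ)*p + (1/2+δ)*q = c - δ*d := by rw [hcdef, hddef]; ring
    have hxc : 0 < c + δ*d := by nlinarith
    have hyc : 0 < c - δ*d := by nlinarith
    rw [ex, ey, ex', ey', sklTerm, sklTerm,
      if_pos (iff_of_false hxc.ne' hyc.ne'), if_pos (iff_of_false hx'c.ne' hy'c.ne'),
      ← ENNReal.ofReal_mul (sq_nonneg _)]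
    apply ENNReal.ofReal_le_ofReal
    rw [show (c+δ*d) - (c-δ*d) = 2*δ*d by ring, show (c+δ'*d) - (c-δ'*d) = 2*δ'*d by ring]
    exact key hc hδpos hle hx'c hy'c
  · have hiff : ¬ (x' = 0 ↔ y' = 0) := by
      intro hiff
      by_cases hx0 : x' = 0
      · have hy0 := hiff.mp hx0
        rw [hx0, hy0] at hsum
        exact hs (by linarith)
      · exact hpos ⟨lt_of_le_of_ne hx'0 (Ne.symm hx0),
          lt_of_le_of_ne hy'0 (Ne.symm fun h => hx0 (hiff.mpr h))⟩
    have hT : sklTerm x' y' = ⊤ := by rw [sklTerm, if_neg hiff]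
    rw [hT, ENNReal.mul_top]
    · exact le_top
    · simp only [ne_eq, ENNReal.ofReal_eq_zero, not_le]
      positivity

lemma SKL_le {α : Type*} (P Q : α → ℝ) (hP : ∀ a, 0 ≤ P a) (hQ : ∀ a, 0 ≤ Q a)
    (δ δ' : ℝ) (hδ0 : 0 ≤ δ) (hδ'0 : 0 < δ') (hδ' : δ' ≤ 1/2) (hle : δ ≤ δ') :
    SKL (fun a => (1/2 + δ) * P a + (1/2 - δ) * Q a)
        (fun a => (1/2 - δ) * P a + (1/2 + δ) * Q a)
      ≤ ENNReal.ofReal ((δ / δ') ^ 2) *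
        SKL (fun a => (1/2 + δ') * P a + (1/2 - δ') * Q a)
            (fun a => (1/2 - δ') * P a + (1/2 + δ') * Q a) := by
  rw [SKL, SKL, ← ENNReal.tsum_mul_left]
  exact ENNReal.tsum_le_tsum fun a => term_le (hP a) (hQ a) hδ0 hδ'0 hδ' hle

theorem stmt0 {α : Type*} [Countable α] (P Q : α → ℝ) (hP : IsPMF P) (hQ : IsPMF Q)
    (δ δ' : ℝ) (hδ0 : 0 ≤ δ) (hδ : δ ≤ 1 / 2) (hδ'0 : 0 < δ') (hδ' : δ' ≤ 1 / 2)
    (hle : δ ≤ δ') :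
    SKL (fun a => (1 / 2 + δ) * P a + (1 / 2 - δ) * Q a)
        (fun a => (1 / 2 - δ) * P a + (1 / 2 + δ) * Q a)
      ≤ ENNReal.ofReal ((δ / δ') ^ 2) *
        SKL (fun a => (1 / 2 + δ') * P a + (1 / 2 - δ') * Q a)
            (fun a => (1 / 2 - δ') * P a + (1 / 2 + δ') * Q a) ∧
    SKL (fun a => (1 / 2 + δ) * P a + (1 / 2 - δ) * Q a)
        (fun a => (1 / 2 - δ) * P a + (1 / 2 + δ) * Q a)
      ≤ ENNReal.ofReal (4 * δ ^ 2) * SKL P Q := by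
  constructor
  · exact SKL_le P Q hP.1 hQ.1 δ δ' hδ0 hδ'0 hδ' hle
  · have h := SKL_le P Q hP.1 hQ.1 δ (1/2) hδ0 (by norm_num) (le_refl _) hδ
    have hPe : (fun a => (1/2 + (1:ℝ)/2) * P a + (1/2 - 1/2) * Q a) = P := by
      funext a; ring
    have hQe : (fun a => (1/2 - (1:ℝ)/2) * P a + (1/2 + 1/2) * Q a) = Q := by
      funext a; ring
    rw [hPe, hQe, show (δ / (1/2 : ℝ))^2 = 4 * δ^2 by ring] at h
    exact h
end

section
/- Let P_{Y|X} : Σ → Σ be a channel satisfying a strong data processing inequality for SKL with constant η < 1, i.e. SKL(P_{Y|X}∘P, P_{Y|X}∘Q) ≤ η·SKL(P,Q) for all distributions P, Q on Σ. If 4dν²η < 1, then for any message-passing algorithm under the multilevel noise model on the infinite d-ary tree, SKL(P_n⁺, P_n⁻) → 0 as n → ∞; hence reconstruction of the root label is impossible. -/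
open scoped BigOperators ENNReal

/-- Symmetrized KL divergence `SKL(P,Q) = KL(P,Q) + KL(Q,P)` between two pmfs on a
finite alphabet, valued in `ℝ≥0∞`. -/
noncomputable def SKLe {α : Type*} [Fintype α] (P Q : α → ℝ) : ℝ≥0∞ :=
  ∑ a, sklTerm (P a) (Q a)

/-- `P` is a probability mass function on the finite alphabet `α`. -/
def IsPMFf {α : Type*} [Fintype α] (P : α → ℝ) : Prop :=
  (∀ a, 0 ≤ P a) ∧ (∑ a, P a) = 1

/-- Output distribution of the channel `W : α → α → ℝ` applied to input distribution `P`. -/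
noncomputable def chanApp {α : Type*} [Fintype α] (W : α → α → ℝ) (P : α → ℝ) : α → ℝ :=
  fun b => ∑ a, P a * W a b

/-- Law of the root message of a noisy message-passing algorithm on the depth-`n`
`d`-ary broadcast tree with copy probability `1/2 + ν`, given root label `s`: each
child-to-parent message is passed through an independent copy of the noise channel `W`
before the level-`ℓ` reconstruction function `f ℓ` is applied. -/
noncomputable def noisyMsgLaw {α : Type*} [Fintype α] [DecidableEq α] (d : ℕ) (ν : ℝ)
    (W : α → α → ℝ) (leaf : Bool → α → ℝ) (f : ℕ → (Fin d → α) → α) :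
    ℕ → Bool → α → ℝ
  | 0, s => leaf s
  | n + 1, s => fun y => ∑ x : Fin d → α,
      if f (n + 1) x = y then
        ∏ i, chanApp W
          (fun a => (1 / 2 + ν) * noisyMsgLaw d ν W leaf f n s a
                    + (1 / 2 - ν) * noisyMsgLaw d ν W leaf f n (!s) a) (x i)
      else 0

section Aux

lemma skl_nonneg {x y : ℝ} (hx : 0 < x) (hy : 0 < y) :
    0 ≤ (x - y) * (Real.log x - Real.log y) := by
  rcases le_total x y with h | h
  · nlinarith [Real.log_le_log hx h]
  · nlinarith [Real.log_le_log hy h]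

lemma sklTerm_zero : sklTerm 0 0 = 0 := by simp [sklTerm]

lemma sklTerm_pos {x y : ℝ} (hx : x ≠ 0) (hy : y ≠ 0) :
    sklTerm x y = ENNReal.ofReal ((x - y) * (Real.log x - Real.log y)) := by
  simp only [sklTerm, if_pos (iff_of_false hx hy)]

lemma sklTerm_top {x y : ℝ} (h : ¬ (x = 0 ↔ y = 0)) : sklTerm x y = ⊤ := by
  simp [sklTerm, h]

lemma logmix {ν y x : ℝ} (hν0 : 0 < ν) (hν : ν < 1/2) (hy : 0 < y) (hxy : y ≤ x) :
    Real.log ((1/2+ν)*x + (1/2-ν)*y) - Real.log ((1/2-ν)*x + (1/2+ν)*y)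
      ≤ 2*ν*(Real.log x - Real.log y) := by
  set a : ℝ := 1/2 + ν with ha'
  set b : ℝ := 1/2 - ν with hb'
  have ha : 0 < a := by simp [ha']; linarith
  have hb : 0 < b := by simp [hb']; linarith
  set F : ℝ → ℝ := fun t =>
    2*ν*(Real.log t - Real.log y) - (Real.log (a*t + b*y) - Real.log (b*t + a*y)) with hF
  have key : ∀ t ∈ Set.Ici y, HasDerivAt F
      (2*ν/t - (a/(a*t+b*y) - b/(b*t+a*y))) t := by
    intro t ht
    have ht0 : 0 < t := lt_of_lt_of_le hy ht
    have hA : 0 < a*t + b*y := by positivity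
    have hB : 0 < b*t + a*y := by positivity
    have h1 : HasDerivAt (fun t : ℝ => a*t + b*y) a t := by
      simpa using ((hasDerivAt_id t).const_mul a).add_const (b*y)
    have h2 : HasDerivAt (fun t : ℝ => b*t + a*y) b t := by
      simpa using ((hasDerivAt_id t).const_mul b).add_const (a*y)
    have h1' := h1.log hA.ne'
    have h2' := h2.log hB.ne'
    have h3 := ((Real.hasDerivAt_log ht0.ne').sub_const (Real.log y)).const_mul (2*ν)
    have h4 := h3.sub (h1'.sub h2')
    have hrw : 2*ν/t - (a/(a*t+b*y) - b/(b*t+a*y))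
        = 2*ν*t⁻¹ - (a/(a*t+b*y) - b/(b*t+a*y)) := by rw [div_eq_mul_inv]
    rw [hrw]
    exact h4
  have hmono : MonotoneOn F (Set.Ici y) := by
    apply monotoneOn_of_deriv_nonneg (convex_Ici y)
    · exact fun t ht => (key t ht).continuousAt.continuousWithinAt
    · intro t ht
      exact ((key t (interior_subset ht)).differentiableAt).differentiableWithinAt
    · intro t ht
      rw [interior_Ici] at ht
      have ht' : y < t := ht
      have ht0 : 0 < t := hy.trans ht'
      have hA : 0 < a*t + b*y := by positivity
      have hB : 0 < b*t + a*y := by positivity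
      rw [(key t (le_of_lt ht')).deriv]
      have hab : a*b*(t-y)^2 ≥ 0 := by positivity
      have heq : 2*ν/t - (a/(a*t+b*y) - b/(b*t+a*y))
          = 2*ν*(a*b*(t-y)^2)/(t*(a*t+b*y)*(b*t+a*y)) := by
        field_simp
        rw [ha', hb']
        ring
      rw [heq]
      positivity
  have h0 : F y ≤ F x := hmono (Set.self_mem_Ici) hxy hxy
  have hFy : F y = 0 := by
    have h1 : a*y + b*y = y := by rw [ha', hb']; ring
    have h2 : b*y + a*y = y := by rw [ha', hb']; ring
    simp [hF, h1, h2]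
  rw [hFy] at h0
  simp only [hF] at h0
  linarith

lemma mix_real {ν x y : ℝ} (hν0 : 0 < ν) (hν : ν < 1/2) (hx : 0 < x) (hy : 0 < y) :
    (((1/2+ν)*x + (1/2-ν)*y) - ((1/2+ν)*y + (1/2-ν)*x)) *
      (Real.log ((1/2+ν)*x + (1/2-ν)*y) - Real.log ((1/2+ν)*y + (1/2-ν)*x))
      ≤ 4*ν^2 * ((x - y) * (Real.log x - Real.log y)) := by
  have hd : ((1/2+ν)*x + (1/2-ν)*y) - ((1/2+ν)*y + (1/2-ν)*x) = 2*ν*(x-y) := by ring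
  rw [hd]
  rcases le_total y x with h | h
  · have := logmix hν0 hν hy h
    have h2 : (1/2-ν)*x + (1/2+ν)*y = (1/2+ν)*y + (1/2-ν)*x := by ring
    rw [h2] at this
    nlinarith [mul_le_mul_of_nonneg_left this (by nlinarith : (0:ℝ) ≤ 2*ν*(x-y))]
  · have := logmix hν0 hν hx h
    have h2 : (1/2-ν)*y + (1/2+ν)*x = (1/2+ν)*x + (1/2-ν)*y := by ring
    rw [h2] at this
    nlinarith [mul_le_mul_of_nonneg_left this (by nlinarith : (0:ℝ) ≤ 2*ν*(y-x))]

lemma logsum {a b c d : ℝ} (ha : 0 < a) (hb : 0 < b) (hc : 0 < c) (hd : 0 < d) :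
    (a+c) * Real.log ((a+c)/(b+d)) ≤ a * Real.log (a/b) + c * Real.log (c/d) := by
  have hbd : 0 < b + d := by linarith
  have key := Real.convexOn_mul_log.2 (Set.mem_Ici.2 (le_of_lt (div_pos ha hb)))
    (Set.mem_Ici.2 (le_of_lt (div_pos hc hd)))
    (le_of_lt (div_pos hb hbd)) (le_of_lt (div_pos hd hbd))
    (by field_simp)
  simp only [smul_eq_mul] at key
  have he : b/(b+d) * (a/b) + d/(b+d) * (c/d) = (a+c)/(b+d) := by field_simp
  rw [he] at key
  have := mul_le_mul_of_nonneg_left key (le_of_lt hbd)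
  calc (a+c) * Real.log ((a+c)/(b+d))
      = (b+d) * ((a+c)/(b+d) * Real.log ((a+c)/(b+d))) := by field_simp
    _ ≤ (b+d) * (b/(b+d) * (a/b * Real.log (a/b)) + d/(b+d) * (c/d * Real.log (c/d))) := this
    _ = a * Real.log (a/b) + c * Real.log (c/d) := by field_simp

lemma skl_subadd_real {a b c d : ℝ} (ha : 0 < a) (hb : 0 < b) (hc : 0 < c) (hd : 0 < d) :
    ((a+c) - (b+d)) * (Real.log (a+c) - Real.log (b+d))
      ≤ (a-b) * (Real.log a - Real.log b) + (c-d) * (Real.log c - Real.log d) := by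
  have e : ∀ x y : ℝ, 0 < x → 0 < y →
      (x - y) * (Real.log x - Real.log y) = x * Real.log (x/y) + y * Real.log (y/x) := by
    intro x y hx hy
    rw [Real.log_div hx.ne' hy.ne', Real.log_div hy.ne' hx.ne']
    ring
  rw [e _ _ (by linarith) (by linarith), e _ _ ha hb, e _ _ hc hd]
  have h1 := logsum ha hb hc hd
  have h2 := logsum hb ha hd hc
  linarith

lemma sklTerm_add_le {x1 y1 x2 y2 : ℝ} (hx1 : 0 ≤ x1) (hy1 : 0 ≤ y1)
    (hx2 : 0 ≤ x2) (hy2 : 0 ≤ y2) :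
    sklTerm (x1+x2) (y1+y2) ≤ sklTerm x1 y1 + sklTerm x2 y2 := by
  by_cases h1 : x1 = 0 ↔ y1 = 0
  swap
  · rw [sklTerm_top h1]; simp
  by_cases h2 : x2 = 0 ↔ y2 = 0
  swap
  · rw [sklTerm_top h2]; simp
  rcases eq_or_lt_of_le hx1 with hx1' | hx1'
  · have hx0 : x1 = 0 := hx1'.symm
    have hy0 : y1 = 0 := h1.1 hx0
    rw [hx0, hy0]
    simp [sklTerm_zero]
  rcases eq_or_lt_of_le hx2 with hx2' | hx2'
  · have hx0 : x2 = 0 := hx2'.symm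
    have hy0 : y2 = 0 := h2.1 hx0
    rw [hx0, hy0]
    simp [sklTerm_zero]
  have hy1' : 0 < y1 := lt_of_le_of_ne hy1 (fun h => hx1'.ne' (h1.2 h.symm))
  have hy2' : 0 < y2 := lt_of_le_of_ne hy2 (fun h => hx2'.ne' (h2.2 h.symm))
  rw [sklTerm_pos (by positivity) (by positivity), sklTerm_pos hx1'.ne' hy1'.ne',
    sklTerm_pos hx2'.ne' hy2'.ne',
    ← ENNReal.ofReal_add (skl_nonneg hx1' hy1') (skl_nonneg hx2' hy2')]
  exact ENNReal.ofReal_le_ofReal (skl_subadd_real hx1' hy1' hx2' hy2')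

lemma sklTerm_sum_le {β : Type*} (s : Finset β) (A B : β → ℝ)
    (hA : ∀ i, 0 ≤ A i) (hB : ∀ i, 0 ≤ B i) :
    sklTerm (∑ i ∈ s, A i) (∑ i ∈ s, B i) ≤ ∑ i ∈ s, sklTerm (A i) (B i) := by
  induction s using Finset.cons_induction with
  | empty => simp [sklTerm_zero]
  | cons a s ha ih =>
    rw [Finset.sum_cons, Finset.sum_cons, Finset.sum_cons]
    exact le_trans (sklTerm_add_le (hA a) (hB a)
      (Finset.sum_nonneg fun i _ => hA i) (Finset.sum_nonneg fun i _ => hB i))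
      (add_le_add le_rfl ih)

lemma SKLe_push {β α : Type*} [Fintype β] [Fintype α] [DecidableEq α]
    (g : β → α) (A B : β → ℝ) (hA : ∀ x, 0 ≤ A x) (hB : ∀ x, 0 ≤ B x) :
    SKLe (fun y => ∑ x, if g x = y then A x else 0)
      (fun y => ∑ x, if g x = y then B x else 0) ≤ SKLe A B := by
  unfold SKLe
  have hrw : ∀ (C : β → ℝ) (y : α), (∑ x, if g x = y then C x else 0)
      = ∑ x ∈ Finset.univ.filter (fun x => g x = y), C x := by
    intro C y; rw [Finset.sum_filter]
  calc ∑ y, sklTerm (∑ x, if g x = y then A x else 0) (∑ x, if g x = y then B x else 0)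
      ≤ ∑ y, ∑ x ∈ Finset.univ.filter (fun x => g x = y), sklTerm (A x) (B x) := by
        apply Finset.sum_le_sum
        intro y _
        rw [hrw A y, hrw B y]
        exact sklTerm_sum_le _ _ _ hA hB
    _ = ∑ x, sklTerm (A x) (B x) :=
        Finset.sum_fiberwise_of_maps_to (fun x _ => Finset.mem_univ (g x)) _

lemma sklTerm_mix {ν x y : ℝ} (hν0 : 0 < ν) (hν : ν < 1/2) (hx : 0 ≤ x) (hy : 0 ≤ y) :
    sklTerm ((1/2+ν)*x + (1/2-ν)*y) ((1/2+ν)*y + (1/2-ν)*x)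
      ≤ ENNReal.ofReal (4*ν^2) * sklTerm x y := by
  have hb : (0:ℝ) < 1/2 - ν := by linarith
  have ha : (0:ℝ) < 1/2 + ν := by linarith
  by_cases h : x = 0 ↔ y = 0
  swap
  · rw [sklTerm_top h, ENNReal.mul_top (by simp [ENNReal.ofReal_pos]; positivity)]
    exact le_top
  rcases eq_or_lt_of_le hx with hx' | hx'
  · have hx0 : x = 0 := hx'.symm
    have hy0 : y = 0 := h.1 hx0
    rw [hx0, hy0]
    simp [sklTerm_zero]
  have hy' : 0 < y := lt_of_le_of_ne hy (fun hh => hx'.ne' (h.2 hh.symm))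
  rw [sklTerm_pos (by positivity) (by positivity), sklTerm_pos hx'.ne' hy'.ne',
    ← ENNReal.ofReal_mul (by positivity)]
  exact ENNReal.ofReal_le_ofReal (mix_real hν0 hν hx' hy')

lemma SKLe_mix {α : Type*} [Fintype α] {ν : ℝ} (hν0 : 0 < ν) (hν : ν < 1/2)
    (P Q : α → ℝ) (hP : ∀ a, 0 ≤ P a) (hQ : ∀ a, 0 ≤ Q a) :
    SKLe (fun a => (1/2+ν)*P a + (1/2-ν)*Q a) (fun a => (1/2+ν)*Q a + (1/2-ν)*P a)
      ≤ ENNReal.ofReal (4*ν^2) * SKLe P Q := by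
  unfold SKLe
  rw [Finset.mul_sum]
  exact Finset.sum_le_sum fun a _ => sklTerm_mix hν0 hν (hP a) (hQ a)

lemma SKLe_pi {α : Type*} [Fintype α] (d : ℕ) (A B : α → ℝ)
    (hA : IsPMFf A) (hB : IsPMFf B) (hsupp : ∀ a, A a = 0 ↔ B a = 0) :
    SKLe (fun x : Fin d → α => ∏ i, A (x i)) (fun x : Fin d → α => ∏ i, B (x i))
      ≤ (d : ℝ≥0∞) * SKLe A B := by
  classical
  set ℓ : α → ℝ := fun a => Real.log (A a) - Real.log (B a) with hℓ
  set t : α → ℝ := fun a => (A a - B a) * ℓ a with ht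
  set T : (Fin d → α) → ℝ := fun x => ((∏ i, A (x i)) - ∏ i, B (x i)) * ∑ i, ℓ (x i) with hT
  have hApos : ∀ a, A a ≠ 0 → 0 < A a := fun a h => lt_of_le_of_ne (hA.1 a) (Ne.symm h)
  have hBpos : ∀ a, B a ≠ 0 → 0 < B a := fun a h => lt_of_le_of_ne (hB.1 a) (Ne.symm h)
  have step2 : ∀ a, sklTerm (A a) (B a) = ENNReal.ofReal (t a) := by
    intro a
    by_cases h : A a = 0
    · have hb : B a = 0 := (hsupp a).1 h
      rw [h, hb, sklTerm_zero, ht]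
      simp [h, hb]
    · have hb : B a ≠ 0 := fun hb => h ((hsupp a).2 hb)
      rw [sklTerm_pos h hb]
  have htnonneg : ∀ a, 0 ≤ t a := by
    intro a
    by_cases h : A a = 0
    · simp [ht, h, (hsupp a).1 h]
    · exact skl_nonneg (hApos a h) (hBpos a fun hb => h ((hsupp a).2 hb))
  have step1 : ∀ x : Fin d → α, sklTerm (∏ i, A (x i)) (∏ i, B (x i))
      = ENNReal.ofReal (T x) := by
    intro x
    by_cases hz : ∀ i, A (x i) ≠ 0
    · have hBz : ∀ i, B (x i) ≠ 0 := fun i hb => hz i ((hsupp (x i)).2 hb)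
      have hPA : (0:ℝ) < ∏ i, A (x i) :=
        Finset.prod_pos fun i _ => hApos _ (hz i)
      have hPB : (0:ℝ) < ∏ i, B (x i) :=
        Finset.prod_pos fun i _ => hBpos _ (hBz i)
      rw [sklTerm_pos hPA.ne' hPB.ne']
      congr 1
      rw [Real.log_prod (fun i _ => hz i), Real.log_prod (fun i _ => hBz i), hT]
      rw [← Finset.sum_sub_distrib]
    · push_neg at hz
      obtain ⟨i, hi⟩ := hz
      have hbi : B (x i) = 0 := (hsupp (x i)).1 hi
      have hpa : ∏ i, A (x i) = 0 := Finset.prod_eq_zero (Finset.mem_univ i) hi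
      have hpb : ∏ i, B (x i) = 0 := Finset.prod_eq_zero (Finset.mem_univ i) hbi
      rw [hpa, hpb, sklTerm_zero, hT]
      simp [hpa, hpb]
  have hTnonneg : ∀ x : Fin d → α, 0 ≤ T x := by
    intro x
    by_cases hz : ∀ i, A (x i) ≠ 0
    · have hBz : ∀ i, B (x i) ≠ 0 := fun i hb => hz i ((hsupp (x i)).2 hb)
      have hPA : (0:ℝ) < ∏ i, A (x i) :=
        Finset.prod_pos fun i _ => hApos _ (hz i)
      have hPB : (0:ℝ) < ∏ i, B (x i) :=
        Finset.prod_pos fun i _ => hBpos _ (hBz i)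
      have := skl_nonneg hPA hPB
      rw [Real.log_prod (fun i _ => hz i), Real.log_prod (fun i _ => hBz i),
        ← Finset.sum_sub_distrib] at this
      exact this
    · push_neg at hz
      obtain ⟨i, hi⟩ := hz
      have hpa : ∏ i, A (x i) = 0 := Finset.prod_eq_zero (Finset.mem_univ i) hi
      have hpb : ∏ i, B (x i) = 0 :=
        Finset.prod_eq_zero (Finset.mem_univ i) ((hsupp (x i)).1 hi)
      simp [hT, hpa, hpb]
  have key : ∀ (C : α → ℝ), (∀ a, 0 ≤ C a) → (∑ a, C a) = 1 → ∀ i : Fin d,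
      ∑ x : Fin d → α, (∏ j, C (x j)) * ℓ (x i) = ∑ a, C a * ℓ a := by
    intro C hC0 hC1 i
    have e1 : ∀ x : Fin d → α, (∏ j, C (x j)) * ℓ (x i)
        = ∏ j, (if j = i then C (x j) * ℓ (x j) else C (x j)) := by
      intro x
      rw [← Finset.mul_prod_erase Finset.univ
        (fun j => if j = i then C (x j) * ℓ (x j) else C (x j)) (Finset.mem_univ i),
        if_pos rfl,
        Finset.prod_congr rfl (fun j hj => if_neg (Finset.ne_of_mem_erase hj)),
        ← Finset.mul_prod_erase Finset.univ (fun j => C (x j)) (Finset.mem_univ i)]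
      ring
    calc ∑ x : Fin d → α, (∏ j, C (x j)) * ℓ (x i)
        = ∑ x : Fin d → α, ∏ j, (if j = i then C (x j) * ℓ (x j) else C (x j)) :=
          Finset.sum_congr rfl fun x _ => e1 x
      _ = ∏ j, ∑ a, (if j = i then C a * ℓ a else C a) := by
          rw [← Fintype.piFinset_univ]
          exact Finset.sum_prod_piFinset Finset.univ
            (fun j a => if j = i then C a * ℓ a else C a)
      _ = ∑ a, C a * ℓ a := by
          rw [Finset.prod_congr rfl (fun j _ => by
            by_cases hj : j = i <;> simp [hj, hC1] : ∀ j ∈ Finset.univ,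
              (∑ a, if j = i then C a * ℓ a else C a)
                = if j = i then (∑ a, C a * ℓ a) else 1)]
          simp
  have step4 : ∑ x : Fin d → α, T x = d * ∑ a, t a := by
    have h5 : ∀ x : Fin d → α, T x
        = ∑ i, ((∏ j, A (x j)) * ℓ (x i) - (∏ j, B (x j)) * ℓ (x i)) := by
      intro x
      rw [hT]
      dsimp only
      rw [Finset.mul_sum]
      exact Finset.sum_congr rfl fun i _ => by ring
    rw [Finset.sum_congr rfl fun x _ => h5 x, Finset.sum_comm]
    have h6 : ∀ i : Fin d, ∑ x : Fin d → α,
        ((∏ j, A (x j)) * ℓ (x i) - (∏ j, B (x j)) * ℓ (x i)) = ∑ a, t a := by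
      intro i
      rw [Finset.sum_sub_distrib, key A hA.1 hA.2 i, key B hB.1 hB.2 i,
        ← Finset.sum_sub_distrib]
      exact Finset.sum_congr rfl fun a _ => by rw [ht]; ring
    rw [Finset.sum_congr rfl fun i _ => h6 i, Finset.sum_const, Finset.card_univ,
      Fintype.card_fin, nsmul_eq_mul]
  unfold SKLe
  calc ∑ x : Fin d → α, sklTerm (∏ i, A (x i)) (∏ i, B (x i))
      = ∑ x : Fin d → α, ENNReal.ofReal (T x) :=
        Finset.sum_congr rfl fun x _ => step1 x
    _ = ENNReal.ofReal (∑ x : Fin d → α, T x) :=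
        (ENNReal.ofReal_sum_of_nonneg fun x _ => hTnonneg x).symm
    _ = ENNReal.ofReal (d * ∑ a, t a) := by rw [step4]
    _ = (d : ℝ≥0∞) * ENNReal.ofReal (∑ a, t a) := by
        rw [ENNReal.ofReal_mul (by positivity), ENNReal.ofReal_natCast]
    _ = (d : ℝ≥0∞) * ∑ a, ENNReal.ofReal (t a) := by
        rw [ENNReal.ofReal_sum_of_nonneg fun a _ => htnonneg a]
    _ ≤ (d : ℝ≥0∞) * SKLe A B := by
        unfold SKLe
        rw [Finset.sum_congr rfl fun a _ => (step2 a)]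

lemma mix_pmf {α : Type*} [Fintype α] {ν : ℝ} (hν0 : 0 < ν) (hν : ν < 1/2)
    {P Q : α → ℝ} (hP : IsPMFf P) (hQ : IsPMFf Q) :
    IsPMFf (fun a => (1/2+ν)*P a + (1/2-ν)*Q a) := by
  constructor
  · intro a
    have := hP.1 a; have := hQ.1 a
    nlinarith
  · rw [Finset.sum_add_distrib, ← Finset.mul_sum, ← Finset.mul_sum, hP.2, hQ.2]
    ring

lemma chanApp_pmf {α : Type*} [Fintype α] {W : α → α → ℝ} (hW : ∀ a, IsPMFf (W a))
    {P : α → ℝ} (hP : IsPMFf P) : IsPMFf (chanApp W P) := by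
  unfold chanApp
  constructor
  · intro b
    exact Finset.sum_nonneg fun a _ => mul_nonneg (hP.1 a) ((hW a).1 b)
  · rw [Finset.sum_comm]
    calc ∑ a, ∑ b, P a * W a b = ∑ a, P a * ∑ b, W a b := by
          exact Finset.sum_congr rfl fun a _ => (Finset.mul_sum _ _ _).symm
      _ = 1 := by
          rw [Finset.sum_congr rfl fun a (_ : a ∈ Finset.univ) => by rw [(hW a).2, mul_one]]
          exact hP.2

lemma pi_pmf {α : Type*} [Fintype α] (d : ℕ) {Q : α → ℝ} (hQ : IsPMFf Q) :
    IsPMFf (fun x : Fin d → α => ∏ i, Q (x i)) := by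
  constructor
  · intro x
    exact Finset.prod_nonneg fun i _ => hQ.1 (x i)
  · rw [← Fintype.piFinset_univ, Finset.sum_prod_piFinset Finset.univ (fun _ a => Q a)]
    simp [hQ.2]

lemma push_pmf {β α : Type*} [Fintype β] [Fintype α] [DecidableEq α] (g : β → α)
    {R : β → ℝ} (hR : IsPMFf R) :
    IsPMFf (fun y => ∑ x, if g x = y then R x else 0) := by
  constructor
  · intro y
    apply Finset.sum_nonneg
    intro x _
    by_cases h : g x = y
    · simp [h, hR.1 x]
    · simp [h]
  · rw [Finset.sum_comm]
    simp [Finset.sum_ite_eq, hR.2]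

lemma mix_supp {α : Type*} [Fintype α] {ν : ℝ} (hν0 : 0 < ν) (hν : ν < 1/2)
    {P Q : α → ℝ} (hP : ∀ a, 0 ≤ P a) (hQ : ∀ a, 0 ≤ Q a) (a : α) :
    ((1/2+ν)*P a + (1/2-ν)*Q a = 0) ↔ (P a = 0 ∧ Q a = 0) := by
  have h1 := hP a; have h2 := hQ a
  constructor
  · intro h
    constructor <;> nlinarith
  · rintro ⟨hp, hq⟩
    rw [hp, hq]; ring

lemma chanApp_supp {α : Type*} [Fintype α] {W : α → α → ℝ} (hW : ∀ a, IsPMFf (W a))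
    {P Q : α → ℝ} (hP : ∀ a, 0 ≤ P a) (hQ : ∀ a, 0 ≤ Q a)
    (h : ∀ a, P a = 0 ↔ Q a = 0) (b : α) :
    chanApp W P b = 0 ↔ chanApp W Q b = 0 := by
  unfold chanApp
  rw [Finset.sum_eq_zero_iff_of_nonneg fun a _ => mul_nonneg (hP a) ((hW a).1 b),
    Finset.sum_eq_zero_iff_of_nonneg fun a _ => mul_nonneg (hQ a) ((hW a).1 b)]
  constructor <;> intro hh a ha <;> have := hh a ha <;>
    rcases mul_eq_zero.1 this with h' | h'
  · rw [(h a).1 h', zero_mul]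
  · rw [h', mul_zero]
  · rw [(h a).2 h', zero_mul]
  · rw [h', mul_zero]

lemma SKLe_ne_top {α : Type*} [Fintype α] {P Q : α → ℝ}
    (h : ∀ a, P a = 0 ↔ Q a = 0) : SKLe P Q ≠ ⊤ := by
  unfold SKLe
  rw [← lt_top_iff_ne_top]
  apply ENNReal.sum_lt_top.2
  intro a _
  by_cases hp : P a = 0
  · rw [hp, (h a).1 hp, sklTerm_zero]; exact ENNReal.zero_lt_top
  · rw [sklTerm_pos hp (fun hq => hp ((h a).2 hq))]
    exact ENNReal.ofReal_lt_top

end Aux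

/-- If the noise channel satisfies an SDPI for SKL with constant `η < 1` and
`4dν²η < 1`, then for any noisy message-passing algorithm on the `d`-ary tree,
`SKL(Pₙ⁺, Pₙ⁻) → 0`; hence reconstruction of the root label is impossible. -/
theorem stmt2 (d : ℕ) (hd : 1 ≤ d) (ν : ℝ) (hν0 : 0 < ν) (hν : ν < 1 / 2)
    (α : Type*) [Fintype α] [DecidableEq α]
    (W : α → α → ℝ) (hW : ∀ a, IsPMFf (W a))
    (η : ℝ) (hη0 : 0 ≤ η) (hη1 : η < 1)
    (hSDPI : ∀ P Q : α → ℝ, IsPMFf P → IsPMFf Q →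
      SKLe (chanApp W P) (chanApp W Q) ≤ ENNReal.ofReal η * SKLe P Q)
    (hcrit : 4 * d * ν ^ 2 * η < 1)
    (leaf : Bool → α → ℝ) (hleaf : ∀ s, IsPMFf (leaf s))
    (f : ℕ → (Fin d → α) → α) :
    Filter.Tendsto
      (fun n => SKLe (noisyMsgLaw d ν W leaf f n true) (noisyMsgLaw d ν W leaf f n false))
      Filter.atTop (nhds 0) := by
  classical
  set P : ℕ → Bool → α → ℝ := noisyMsgLaw d ν W leaf f with hP
  set M : ℕ → Bool → α → ℝ := fun n s a => (1/2+ν) * P n s a + (1/2-ν) * P n (!s) a with hM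
  set Q : ℕ → Bool → α → ℝ := fun n s => chanApp W (M n s) with hQ
  -- pmf facts
  have hpmf : ∀ n s, IsPMFf (P n s) := by
    intro n
    induction n with
    | zero => intro s; exact hleaf s
    | succ n ih =>
      intro s
      have hMp : IsPMFf (M n s) := mix_pmf hν0 hν (ih s) (ih (!s))
      have hQp : IsPMFf (Q n s) := chanApp_pmf hW hMp
      have := push_pmf (f (n+1)) (pi_pmf d hQp)
      exact this
  have hMpmf : ∀ n s, IsPMFf (M n s) := fun n s => mix_pmf hν0 hν (hpmf n s) (hpmf n (!s))
  have hQpmf : ∀ n s, IsPMFf (Q n s) := fun n s => chanApp_pmf hW (hMpmf n s)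
  have hMsupp : ∀ n a, M n true a = 0 ↔ M n false a = 0 := by
    intro n a
    rw [show M n true a = (1/2+ν) * P n true a + (1/2-ν) * P n false a from rfl,
      show M n false a = (1/2+ν) * P n false a + (1/2-ν) * P n true a from rfl,
      mix_supp hν0 hν (hpmf n true).1 (hpmf n false).1 a,
      mix_supp hν0 hν (hpmf n false).1 (hpmf n true).1 a]
    tauto
  have hQsupp : ∀ n b, Q n true b = 0 ↔ Q n false b = 0 := fun n b =>
    chanApp_supp hW (hMpmf n true).1 (hMpmf n false).1 (hMsupp n) b
  -- one-step inequality (to the mixture level)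
  have stepA : ∀ n, SKLe (P (n+1) true) (P (n+1) false)
      ≤ (d : ℝ≥0∞) * (ENNReal.ofReal η * SKLe (M n true) (M n false)) := by
    intro n
    have h1 : SKLe (P (n+1) true) (P (n+1) false)
        ≤ SKLe (fun x : Fin d → α => ∏ i, Q n true (x i))
            (fun x : Fin d → α => ∏ i, Q n false (x i)) := by
      have e : ∀ s, P (n+1) s = fun y => ∑ x : Fin d → α,
          if f (n+1) x = y then ∏ i, Q n s (x i) else 0 := by
        intro s
        rfl
      rw [e true, e false]
      exact SKLe_push (f (n+1)) _ _ (fun x => (pi_pmf d (hQpmf n true)).1 x)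
        (fun x => (pi_pmf d (hQpmf n false)).1 x)
    have h2 := SKLe_pi d (Q n true) (Q n false) (hQpmf n true) (hQpmf n false) (hQsupp n)
    have h3 := hSDPI (M n true) (M n false) (hMpmf n true) (hMpmf n false)
    calc SKLe (P (n+1) true) (P (n+1) false)
        ≤ SKLe (fun x : Fin d → α => ∏ i, Q n true (x i))
            (fun x : Fin d → α => ∏ i, Q n false (x i)) := h1
      _ ≤ (d : ℝ≥0∞) * SKLe (Q n true) (Q n false) := h2
      _ ≤ (d : ℝ≥0∞) * (ENNReal.ofReal η * SKLe (M n true) (M n false)) :=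
          mul_le_mul_right h3 _
  -- mixture contraction
  have stepB : ∀ n, SKLe (M n true) (M n false)
      ≤ ENNReal.ofReal (4*ν^2) * SKLe (P n true) (P n false) := by
    intro n
    have := SKLe_mix hν0 hν (P n true) (P n false) (hpmf n true).1 (hpmf n false).1
    exact this
  set S : ℕ → ℝ≥0∞ := fun n => SKLe (P n true) (P n false) with hS
  set c : ℝ≥0∞ := ENNReal.ofReal (4 * d * ν^2 * η) with hc
  have hstep : ∀ n, S (n+1) ≤ c * S n := by
    intro n
    calc S (n+1) ≤ (d : ℝ≥0∞) * (ENNReal.ofReal η * SKLe (M n true) (M n false)) := stepA n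
      _ ≤ (d : ℝ≥0∞) * (ENNReal.ofReal η * (ENNReal.ofReal (4*ν^2) * S n)) :=
          mul_le_mul_right (mul_le_mul_right (stepB n) _) _
      _ = c * S n := by
          rw [hc, ← mul_assoc, ← mul_assoc, ← ENNReal.ofReal_natCast d,
            ← ENNReal.ofReal_mul (by positivity), ← ENNReal.ofReal_mul (by positivity)]
          congr 2
          ring
  have hfin : S 1 ≠ ⊤ := by
    apply ne_top_of_le_ne_top _ (stepA 0)
    exact ENNReal.mul_ne_top (ENNReal.natCast_ne_top d)
      (ENNReal.mul_ne_top ENNReal.ofReal_ne_top (SKLe_ne_top (hMsupp 0)))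
  have hbound : ∀ m, S (m+1) ≤ c^m * S 1 := by
    intro m
    induction m with
    | zero => simp
    | succ m ih =>
      calc S (m+2) ≤ c * S (m+1) := hstep (m+1)
        _ ≤ c * (c^m * S 1) := mul_le_mul_right ih _
        _ = c^(m+1) * S 1 := by ring
  have hc1 : c < 1 := ENNReal.ofReal_lt_one.2 hcrit
  have htend : Filter.Tendsto (fun m : ℕ => c^m * S 1) Filter.atTop (nhds 0) := by
    have := ENNReal.Tendsto.mul_const
      (ENNReal.tendsto_pow_atTop_nhds_zero_of_lt_one hc1) (Or.inr hfin)
    simpa using this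
  have htend' : Filter.Tendsto (fun n : ℕ => c^(n-1) * S 1) Filter.atTop (nhds 0) :=
    htend.comp (Filter.tendsto_sub_atTop_nat 1)
  apply tendsto_of_tendsto_of_tendsto_of_le_of_le' tendsto_const_nhds htend'
  · exact Filter.Eventually.of_forall fun n => zero_le
  · rw [Filter.eventually_atTop]
    refine ⟨1, fun n hn => ?_⟩
    obtain ⟨m, rfl⟩ := Nat.exists_eq_add_of_le hn
    simpa [Nat.add_comm] using hbound m
end

section
/- Fix d ≥ 1, γ > 0, and a finite alphabet Σ with |Σ| ≤ d. Let Δ_γ be the set of probability vectors p on Σ with p_a ≥ γ for all a ∈ Σ. Then there exists η = η(|Σ|, γ, d) < 1 such that for every function f : Σ^d → Σ and all P ≠ Q in Δ_γ, KL(f_*(P^{⊗d}), f_*(Q^{⊗d})) ≤ η · KL(P^{⊗d}, Q^{⊗d}) = η · d · KL(P,Q). -/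
open scoped BigOperators

/-- Kullback-Leibler divergence between two probability mass functions on a finite alphabet. -/
noncomputable def KLf {α : Type*} [Fintype α] (P Q : α → ℝ) : ℝ :=
  ∑ a, P a * Real.log (P a / Q a)

/-- The `d`-fold product `P^{⊗d}` of a probability mass function `P`. -/
noncomputable def prodPMF {α : Type*} (d : ℕ) (P : α → ℝ) : (Fin d → α) → ℝ :=
  fun x => ∏ i, P (x i)

/-- Pushforward of a probability mass function `μ` on `Σ^d` by a function `f : Σ^d → Σ`. -/
noncomputable def pushf {α : Type*} [Fintype α] [DecidableEq α] {d : ℕ}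
    (f : (Fin d → α) → α) (μ : (Fin d → α) → ℝ) : α → ℝ :=
  fun s => ∑ x : Fin d → α, if f x = s then μ x else 0


section Aux
set_option linter.unusedSectionVars false

/-- `a - b ≤ a log(a/b)` for positives. -/
lemma KL_aux_A {a b : ℝ} (ha : 0 < a) (hb : 0 < b) : a - b ≤ a * Real.log (a / b) := by
  have h := Real.log_le_sub_one_of_pos (show (0:ℝ) < b / a by positivity)
  have hlog : Real.log (a / b) = - Real.log (b / a) := by
    rw [Real.log_div (ne_of_gt ha) (ne_of_gt hb), Real.log_div (ne_of_gt hb) (ne_of_gt ha)]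
    ring
  rw [hlog]
  have : a * Real.log (b/a) ≤ a * (b/a - 1) := by
    exact mul_le_mul_of_nonneg_left h ha.le
  have h2 : a * (b/a - 1) = b - a := by field_simp
  nlinarith [this]

/-- `(1-t) + (1-t)^2/2 ≤ -log t` on `(0,1]`. -/
lemma KL_aux_i {t : ℝ} (ht : 0 < t) (ht1 : t ≤ 1) :
    (1 - t) + (1 - t)^2/2 ≤ - Real.log t := by
  set h : ℝ → ℝ := fun t => - Real.log t - (1 - t) - (1 - t)^2/2 with hh
  have key : AntitoneOn h (Set.Ioc 0 1) := by
    apply antitoneOn_of_deriv_nonpos (convex_Ioc 0 1)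
    · apply ContinuousOn.sub
      apply ContinuousOn.sub
      · exact (Real.continuousOn_log.mono (by intro x hx; exact ne_of_gt hx.1)).neg
      · fun_prop
      · fun_prop
    · rw [interior_Ioc]
      intro x hx
      have hx0 : x ≠ 0 := ne_of_gt hx.1
      apply DifferentiableAt.differentiableWithinAt
      apply DifferentiableAt.sub
      apply DifferentiableAt.sub
      · exact (Real.differentiableAt_log hx0).neg
      · fun_prop
      · fun_prop
    · rw [interior_Ioc]
      intro x hx
      have hd : HasDerivAt h (-x⁻¹ - (-1) - (2*(1-x)*(-1))/2) x := by
        have h1 := (Real.hasDerivAt_log (ne_of_gt hx.1)).neg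
        have h2 : HasDerivAt (fun t : ℝ => (1:ℝ) - t) (-1) x := by
          simpa using (hasDerivAt_id x).const_sub 1
        have h3 : HasDerivAt (fun t : ℝ => (1-t)^2/2) ((2*(1-x)*(-1))/2) x := by
          exact (h2.pow 2).div_const 2 |>.congr_deriv (by ring)
        exact (h1.sub h2).sub h3
      rw [hd.deriv]
      have hx0 : x ≠ 0 := ne_of_gt hx.1
      have heq : -x⁻¹ - (-1) - (2*(1-x)*(-1))/2 = -((1-x)^2/x) := by
        field_simp; ring
      rw [heq]
      have h1 : (0:ℝ) ≤ (1-x)^2/x := div_nonneg (sq_nonneg _) hx.1.le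
      linarith
  have h1 : h 1 = 0 := by simp [hh]
  have := key (Set.mem_Ioc.2 ⟨ht, ht1⟩) (Set.mem_Ioc.2 ⟨one_pos, le_refl 1⟩) ht1
  rw [h1] at this
  simp only [hh] at this
  linarith

/-- `(t-1) + (1-t)^2/2 ≤ t log t` on `(0,1]`. -/
lemma KL_aux_ii {t : ℝ} (ht : 0 < t) (ht1 : t ≤ 1) :
    (t - 1) + (1 - t)^2/2 ≤ t * Real.log t := by
  set g : ℝ → ℝ := fun t => t * Real.log t - (t - 1) - (1 - t)^2/2 with hg
  have key : AntitoneOn g (Set.Ioc 0 1) := by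
    apply antitoneOn_of_deriv_nonpos (convex_Ioc 0 1)
    · apply ContinuousOn.sub
      apply ContinuousOn.sub
      · exact (continuousOn_id.mul (Real.continuousOn_log.mono (by intro x hx; exact ne_of_gt hx.1)))
      · fun_prop
      · fun_prop
    · rw [interior_Ioc]
      intro x hx
      apply DifferentiableAt.differentiableWithinAt
      apply DifferentiableAt.sub
      apply DifferentiableAt.sub
      · exact (differentiableAt_id.mul (Real.differentiableAt_log (ne_of_gt hx.1)))
      · fun_prop
      · fun_prop
    · rw [interior_Ioc]
      intro x hx
      have hd : HasDerivAt g (Real.log x + 1 - 1 - (1 - x)*(-1)) x := by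
        have h1 : HasDerivAt (fun t : ℝ => t * Real.log t) (Real.log x + 1) x := by
          have := (hasDerivAt_id x).mul (Real.hasDerivAt_log (ne_of_gt hx.1))
          refine this.congr_deriv ?_
          have hx0 : x ≠ 0 := ne_of_gt hx.1
          simp [hx0]
        have h2 : HasDerivAt (fun t : ℝ => t - 1) 1 x := by
          simpa using (hasDerivAt_id x).sub_const 1
        have h3 : HasDerivAt (fun t : ℝ => (1-t)^2/2) ((2*(1-x)*(-1))/2) x := by
          have h4 : HasDerivAt (fun t : ℝ => (1:ℝ) - t) (-1) x := by
            simpa using (hasDerivAt_id x).const_sub 1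
          exact (h4.pow 2).div_const 2 |>.congr_deriv (by ring)
        exact ((h1.sub h2).sub h3).congr_deriv (by ring)
      rw [hd.deriv]
      have hlog := Real.log_le_sub_one_of_pos hx.1
      nlinarith
  have g1 : g 1 = 0 := by simp [hg]
  have := key (Set.mem_Ioc.2 ⟨ht, ht1⟩) (Set.mem_Ioc.2 ⟨one_pos, le_refl 1⟩) ht1
  rw [g1] at this
  simp only [hg] at this
  linarith
/-- Quadratic strengthening: `(a-b) + (a-b)^2/2 ≤ a log(a/b)` for `a, b ∈ (0,1]`. -/
lemma KL_aux_B {a b : ℝ} (ha : 0 < a) (ha1 : a ≤ 1) (hb : 0 < b) (hb1 : b ≤ 1) :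
    (a - b) + (a - b)^2/2 ≤ a * Real.log (a / b) := by
  rcases le_or_gt b a with hba | hab
  · -- b ≤ a, use KL_aux_i with t = b/a
    have ht : 0 < b / a := by positivity
    have ht1 : b / a ≤ 1 := (div_le_one ha).2 hba
    have h := KL_aux_i ht ht1
    have hlog : Real.log (a / b) = - Real.log (b / a) := by
      rw [Real.log_div (ne_of_gt ha) (ne_of_gt hb), Real.log_div (ne_of_gt hb) (ne_of_gt ha)]
      ring
    rw [hlog]
    have h2 : a * ((1 - b/a) + (1 - b/a)^2/2) ≤ a * (- Real.log (b/a)) :=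
      mul_le_mul_of_nonneg_left h ha.le
    have h3 : a * ((1 - b/a) + (1 - b/a)^2/2) = (a - b) + (a-b)^2/(2*a) := by
      field_simp
    rw [h3] at h2
    have h4 : (a-b)^2/2 ≤ (a-b)^2/(2*a) := by
      apply div_le_div_of_nonneg_left (sq_nonneg _) (by positivity)
      nlinarith
    linarith
  · -- a < b, use KL_aux_ii with t = a/b
    have ht : 0 < a / b := by positivity
    have ht1 : a / b ≤ 1 := (div_le_one hb).2 hab.le
    have h := KL_aux_ii ht ht1
    have h2 : b * ((a/b - 1) + (1 - a/b)^2/2) ≤ b * (a/b * Real.log (a/b)) :=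
      mul_le_mul_of_nonneg_left h hb.le
    have h3 : b * (a/b * Real.log (a/b)) = a * Real.log (a/b) := by
      field_simp
    have h4 : b * ((a/b - 1) + (1 - a/b)^2/2) = (a - b) + (a-b)^2/(2*b) := by
      field_simp; ring
    rw [h3, h4] at h2
    have h5 : (a-b)^2/2 ≤ (a-b)^2/(2*b) := by
      apply div_le_div_of_nonneg_left (sq_nonneg _) (by positivity)
      nlinarith
    linarith

/-- Upper bound: `a log(a/b) ≤ (a-b) + (a-b)^2/b` for positives. -/
lemma KL_aux_chi {a b : ℝ} (ha : 0 < a) (hb : 0 < b) :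
    a * Real.log (a / b) ≤ (a - b) + (a - b)^2/b := by
  have h := Real.log_le_sub_one_of_pos (show (0:ℝ) < a / b by positivity)
  have h2 : a * Real.log (a/b) ≤ a * (a/b - 1) := mul_le_mul_of_nonneg_left h ha.le
  have h3 : a * (a/b - 1) = (a - b) + (a-b)^2/b := by field_simp; ring
  linarith

variable {α : Type*} [Fintype α]

lemma prodPMF_pos {P : α → ℝ} (hP : ∀ a, 0 < P a) (d : ℕ) (x : Fin d → α) :
    0 < prodPMF d P x :=
  Finset.prod_pos (fun i _ => hP (x i))

lemma prodPMF_ge {P : α → ℝ} {γ : ℝ} (hγ : 0 ≤ γ) (hP : ∀ a, γ ≤ P a) (d : ℕ)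
    (x : Fin d → α) : γ ^ d ≤ prodPMF d P x := by
  unfold prodPMF
  calc γ ^ d = ∏ _i : Fin d, γ := by simp
  _ ≤ ∏ i, P (x i) := Finset.prod_le_prod (fun i _ => hγ) (fun i _ => hP (x i))

lemma pmf_le_one {P : α → ℝ} (hP : ∀ a, 0 < P a) (hP1 : ∑ a, P a = 1) (a : α) :
    P a ≤ 1 := by
  rw [← hP1]
  exact Finset.single_le_sum (fun b _ => (hP b).le) (Finset.mem_univ a)

lemma prodPMF_le_one {P : α → ℝ} (hP : ∀ a, 0 < P a) (hP1 : ∑ a, P a = 1) (d : ℕ)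
    (x : Fin d → α) : prodPMF d P x ≤ 1 := by
  unfold prodPMF
  calc ∏ i, P (x i) ≤ ∏ _i : Fin d, 1 :=
        Finset.prod_le_prod (fun i _ => (hP (x i)).le) (fun i _ => pmf_le_one hP hP1 (x i))
  _ = 1 := by simp

lemma prodPMF_cons {P : α → ℝ} {n : ℕ} (a : α) (x : Fin n → α) :
    prodPMF (n+1) P (Fin.cons a x) = P a * prodPMF n P x := by
  unfold prodPMF
  rw [Fin.prod_univ_succ]
  simp

lemma sum_cons_equiv {n : ℕ} (F : (Fin (n+1) → α) → ℝ) :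
    ∑ y : Fin (n+1) → α, F y = ∑ a : α, ∑ x : Fin n → α, F (Fin.cons a x) := by
  rw [← Equiv.sum_comp (Fin.consEquiv (fun _ => α)) F, Fintype.sum_prod_type]
  rfl

lemma sum_prodPMF {P : α → ℝ} (hP1 : ∑ a, P a = 1) (d : ℕ) :
    ∑ x : Fin d → α, prodPMF d P x = 1 := by
  induction d with
  | zero => simp [prodPMF]
  | succ n ih =>
      rw [sum_cons_equiv (prodPMF (n+1) P)]
      simp only [prodPMF_cons]
      rw [← Finset.sum_mul_sum]
      rw [hP1, ih]; norm_num

lemma KLf_prodPMF {P Q : α → ℝ} (hP : ∀ a, 0 < P a) (hQ : ∀ a, 0 < Q a)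
    (hP1 : ∑ a, P a = 1) (hQ1 : ∑ a, Q a = 1) (d : ℕ) :
    KLf (prodPMF d P) (prodPMF d Q) = d * KLf P Q := by
  induction d with
  | zero => simp [KLf, prodPMF]
  | succ n ih =>
      unfold KLf
      rw [sum_cons_equiv]
      have key : ∀ (a : α) (x : Fin n → α),
          prodPMF (n+1) P (Fin.cons a x) *
            Real.log (prodPMF (n+1) P (Fin.cons a x) / prodPMF (n+1) Q (Fin.cons a x))
          = P a * Real.log (P a / Q a) * prodPMF n P x
            + P a * (prodPMF n P x * Real.log (prodPMF n P x / prodPMF n Q x)) := by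
        intro a x
        rw [prodPMF_cons, prodPMF_cons]
        have h1 : 0 < prodPMF n P x := prodPMF_pos hP n x
        have h2 : 0 < prodPMF n Q x := prodPMF_pos hQ n x
        rw [mul_div_mul_comm, Real.log_mul (ne_of_gt (div_pos (hP a) (hQ a))) (ne_of_gt (div_pos h1 h2))]
        ring
      simp only [key]
      rw [Finset.sum_comm]
      simp only [Finset.sum_add_distrib]
      rw [Finset.sum_comm]
      have e1 : ∑ a : α, ∑ x : Fin n → α, P a * Real.log (P a / Q a) * prodPMF n P x
          = (∑ a : α, P a * Real.log (P a / Q a)) * ∑ x : Fin n → α, prodPMF n P x := by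
        rw [Finset.sum_mul_sum]
      have e2 : ∑ x : Fin n → α, ∑ a : α, P a * (prodPMF n P x * Real.log (prodPMF n P x / prodPMF n Q x))
          = (∑ x : Fin n → α, prodPMF n P x * Real.log (prodPMF n P x / prodPMF n Q x)) * ∑ a : α, P a := by
        rw [Finset.sum_mul_sum]
        apply Finset.sum_congr rfl; intro x _
        apply Finset.sum_congr rfl; intro a _
        ring
      unfold KLf at ih
      rw [e1, e2, sum_prodPMF hP1 n, hP1, ih]
      push_cast
      ring

variable {α : Type*} [Fintype α] [DecidableEq α] {d : ℕ}

/-- The conditional contribution of fiber `s` in the chain rule. -/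
noncomputable def Dterm (f : (Fin d → α) → α) (u v : (Fin d → α) → ℝ) (s : α) : ℝ :=
  ∑ x : Fin d → α, if f x = s then
    u x * Real.log ((u x / v x) * (pushf f v s / pushf f u s)) else 0

lemma le_pushf {f : (Fin d → α) → α} {u : (Fin d → α) → ℝ} (hu : ∀ x, 0 ≤ u x)
    {x : Fin d → α} {s : α} (hx : f x = s) : u x ≤ pushf f u s := by
  unfold pushf
  have : u x = if f x = s then u x else 0 := by simp [hx]
  rw [this]
  apply Finset.single_le_sum (f := fun y => if f y = s then u y else 0)
    (fun y _ => by split <;> simp [hu y]) (Finset.mem_univ x)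

lemma pushf_le_sum {f : (Fin d → α) → α} {u : (Fin d → α) → ℝ} (hu : ∀ x, 0 ≤ u x)
    (s : α) : pushf f u s ≤ ∑ x : Fin d → α, u x := by
  unfold pushf
  apply Finset.sum_le_sum
  intro x _
  split <;> simp [hu x]

lemma pushf_nonneg {f : (Fin d → α) → α} {u : (Fin d → α) → ℝ} (hu : ∀ x, 0 ≤ u x)
    (s : α) : 0 ≤ pushf f u s :=
  Finset.sum_nonneg (fun x _ => by split <;> simp [hu x])

/-- Chain rule for KL divergence along the fibers of `f`. -/
lemma KL_chain (f : (Fin d → α) → α) (u v : (Fin d → α) → ℝ)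
    (hu : ∀ x, 0 < u x) (hv : ∀ x, 0 < v x) :
    KLf u v = KLf (pushf f u) (pushf f v) + ∑ s, Dterm f u v s := by
  have main : ∀ s : α,
      (∑ x : Fin d → α, if f x = s then u x * Real.log (u x / v x) else 0)
      = pushf f u s * Real.log (pushf f u s / pushf f v s) + Dterm f u v s := by
    intro s
    by_cases hne : ∃ x, f x = s
    · obtain ⟨x₀, hx₀⟩ := hne
      have hPs : 0 < pushf f u s := lt_of_lt_of_le (hu x₀) (le_pushf (fun x => (hu x).le) hx₀)
      have hQs : 0 < pushf f v s := lt_of_lt_of_le (hv x₀) (le_pushf (fun x => (hv x).le) hx₀)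
      have hD : Dterm f u v s
          = (∑ x : Fin d → α, if f x = s then u x * Real.log (u x / v x) else 0)
            - (∑ x : Fin d → α, if f x = s then u x else 0)
              * Real.log (pushf f u s / pushf f v s) := by
        unfold Dterm
        rw [Finset.sum_mul, ← Finset.sum_sub_distrib]
        apply Finset.sum_congr rfl
        intro x _
        split
        · rename_i h
          rw [Real.log_mul (ne_of_gt (div_pos (hu x) (hv x)))
              (ne_of_gt (div_pos hQs hPs))]
          rw [Real.log_div (ne_of_gt hQs) (ne_of_gt hPs),
              Real.log_div (ne_of_gt hPs) (ne_of_gt hQs)]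
          ring
        · simp
      rw [hD]
      have : (∑ x : Fin d → α, if f x = s then u x else 0) = pushf f u s := rfl
      rw [this]
      ring
    · push_neg at hne
      have h0 : pushf f u s = 0 := by
        unfold pushf; apply Finset.sum_eq_zero; intro x _; simp [hne x]
      have hDz : Dterm f u v s = 0 := by
        unfold Dterm; apply Finset.sum_eq_zero; intro x _; simp [hne x]
      rw [h0, hDz]
      simp [Finset.sum_eq_zero (fun x _ => by simp [hne x] :
        ∀ x ∈ Finset.univ, (if f x = s then u x * Real.log (u x / v x) else 0) = 0)]
  unfold KLf
  have swap : ∑ x : Fin d → α, u x * Real.log (u x / v x)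
      = ∑ s : α, ∑ x : Fin d → α, if f x = s then u x * Real.log (u x / v x) else 0 := by
    rw [Finset.sum_comm]
    apply Finset.sum_congr rfl
    intro x _
    simp [Finset.sum_ite_eq]
  rw [swap, Finset.sum_congr rfl (fun s _ => main s), Finset.sum_add_distrib]

variable {α : Type*} [Fintype α] [DecidableEq α] {d : ℕ}

lemma Dterm_nonneg (f : (Fin d → α) → α) (u v : (Fin d → α) → ℝ)
    (hu : ∀ x, 0 < u x) (hv : ∀ x, 0 < v x) (s : α) : 0 ≤ Dterm f u v s := by
  unfold Dterm
  by_cases hne : ∃ x, f x = s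
  · obtain ⟨x₀, hx₀⟩ := hne
    have hPs : 0 < pushf f u s := lt_of_lt_of_le (hu x₀) (le_pushf (fun x => (hu x).le) hx₀)
    have hQs : 0 < pushf f v s := lt_of_lt_of_le (hv x₀) (le_pushf (fun x => (hv x).le) hx₀)
    set Ps := pushf f u s
    set Qs := pushf f v s
    have step : ∀ x : Fin d → α,
        (if f x = s then u x - v x * (Ps/Qs) else 0)
        ≤ (if f x = s then u x * Real.log ((u x / v x) * (Qs / Ps)) else 0) := by
      intro x
      split
      · have hb : 0 < v x * (Ps/Qs) := mul_pos (hv x) (div_pos hPs hQs)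
        have := KL_aux_A (hu x) hb
        have harg : u x / (v x * (Ps/Qs)) = (u x / v x) * (Qs / Ps) := by
          field_simp
        rw [harg] at this
        exact this
      · exact le_refl 0
    have hsum := Finset.sum_le_sum (fun x (_ : x ∈ Finset.univ) => step x)
    have hlhs : ∑ x : Fin d → α, (if f x = s then u x - v x * (Ps/Qs) else 0) = 0 := by
      have e : ∀ x : Fin d → α, (if f x = s then u x - v x * (Ps/Qs) else 0)
          = (if f x = s then u x else 0) - (if f x = s then v x else 0) * (Ps/Qs) := by
        intro x; split <;> simp
      rw [Finset.sum_congr rfl (fun x _ => e x), Finset.sum_sub_distrib, ← Finset.sum_mul]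
      have : (∑ x : Fin d → α, if f x = s then u x else 0) = Ps := rfl
      rw [this]
      have : (∑ x : Fin d → α, if f x = s then v x else 0) = Qs := rfl
      rw [this]
      field_simp; simp
    rw [hlhs] at hsum
    exact hsum
  · push_neg at hne
    apply le_of_eq
    exact (Finset.sum_eq_zero (fun x _ => by simp [hne x])).symm

/-- Key quantitative lower bound on the conditional KL contribution of a fiber
containing two points with separated likelihood ratios. -/
lemma Dterm_lower {γd δ : ℝ} (hγd : 0 < γd) (hδ : 0 ≤ δ)
    (f : (Fin d → α) → α) (u v : (Fin d → α) → ℝ)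
    (hu : ∀ w, γd ≤ u w) (hv : ∀ w, γd ≤ v w)
    (hu1 : ∑ w : Fin d → α, u w = 1) (hv1 : ∑ w : Fin d → α, v w = 1)
    {x y : Fin d → α} {s : α} (hx : f x = s) (hy : f y = s)
    (hr : (1+δ) * (u y * v x) ≤ u x * v y) :
    γd^5 * δ^2/8 ≤ Dterm f u v s := by
  have hu0 : ∀ w, 0 < u w := fun w => lt_of_lt_of_le hγd (hu w)
  have hv0 : ∀ w, 0 < v w := fun w => lt_of_lt_of_le hγd (hv w)
  have hPs : 0 < pushf f u s := lt_of_lt_of_le (hu0 x) (le_pushf (fun w => (hu0 w).le) hx)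
  have hQs : 0 < pushf f v s := lt_of_lt_of_le (hv0 x) (le_pushf (fun w => (hv0 w).le) hx)
  set Ps := pushf f u s with hPsdef
  set Qs := pushf f v s with hQsdef
  have hPs1 : Ps ≤ 1 := by rw [← hu1]; exact pushf_le_sum (fun w => (hu0 w).le) s
  have hQs1 : Qs ≤ 1 := by rw [← hv1]; exact pushf_le_sum (fun w => (hv0 w).le) s
  set μ : (Fin d → α) → ℝ := fun w => u w / Ps with hμdef
  set ν : (Fin d → α) → ℝ := fun w => v w / Qs with hνdef
  have hμγ : ∀ w, γd ≤ μ w := by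
    intro w
    calc γd ≤ u w := hu w
    _ ≤ u w / Ps := by rw [le_div_iff₀ hPs]; nlinarith [hu0 w]
    _ = μ w := rfl
  have hνγ : ∀ w, γd ≤ ν w := by
    intro w
    calc γd ≤ v w := hv w
    _ ≤ v w / Qs := by rw [le_div_iff₀ hQs]; nlinarith [hv0 w]
    _ = ν w := rfl
  have hμ0 : ∀ w, 0 < μ w := fun w => lt_of_lt_of_le hγd (hμγ w)
  have hν0 : ∀ w, 0 < ν w := fun w => lt_of_lt_of_le hγd (hνγ w)
  have hμ1 : ∀ w, f w = s → μ w ≤ 1 := by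
    intro w hw
    rw [hμdef]
    have := le_pushf (fun z => (hu0 z).le) hw
    exact (div_le_one hPs).2 this
  have hν1 : ∀ w, f w = s → ν w ≤ 1 := by
    intro w hw
    rw [hνdef]
    have := le_pushf (fun z => (hv0 z).le) hw
    exact (div_le_one hQs).2 this
  -- cross-multiplied ratio separation for μ, ν
  have hrμν : (1+δ) * (μ y * ν x) ≤ μ x * ν y := by
    have e1 : μ y * ν x = (u y * v x) / (Ps * Qs) := by
      rw [hμdef, hνdef]; exact div_mul_div_comm _ _ _ _
    have e2 : μ x * ν y = (u x * v y) / (Ps * Qs) := by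
      rw [hμdef, hνdef]; exact div_mul_div_comm _ _ _ _
    calc (1+δ) * (μ y * ν x) = ((1+δ) * (u y * v x)) / (Ps * Qs) := by
          rw [e1, ← mul_div_assoc]
    _ ≤ (u x * v y) / (Ps * Qs) := by gcongr
    _ = μ x * ν y := e2.symm
  -- one of the two points has masses separated by `γd^2 δ / 2`
  have hνx1 : ν x ≤ 1 := hν1 x hx
  have hνy1 : ν y ≤ 1 := hν1 y hy
  have hAB : γd^2 * δ ≤ |μ x - ν x| + |μ y - ν y| := by
    have h1 : δ * (μ y * ν x) ≤ μ x * ν y - μ y * ν x := by nlinarith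
    have h2 : δ * (γd * γd) ≤ δ * (μ y * ν x) := by
      apply mul_le_mul_of_nonneg_left ?_ hδ
      nlinarith [hμγ y, hνγ x]
    have b1 : (μ x - ν x) * ν y ≤ |μ x - ν x| := by
      calc (μ x - ν x) * ν y ≤ |μ x - ν x| * ν y :=
            mul_le_mul_of_nonneg_right (le_abs_self _) (hν0 y).le
      _ ≤ |μ x - ν x| * 1 := mul_le_mul_of_nonneg_left hνy1 (abs_nonneg _)
      _ = _ := mul_one _
    have b2 : -((μ y - ν y) * ν x) ≤ |μ y - ν y| := by
      calc -((μ y - ν y) * ν x) = (-(μ y - ν y)) * ν x := by ring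
      _ ≤ |μ y - ν y| * ν x :=
            mul_le_mul_of_nonneg_right (neg_le_abs _) (hν0 x).le
      _ ≤ |μ y - ν y| * 1 := mul_le_mul_of_nonneg_left hνx1 (abs_nonneg _)
      _ = _ := mul_one _
    nlinarith
  have hzex : ∃ z, f z = s ∧ γd^2 * δ / 2 ≤ |μ z - ν z| := by
    rcases le_or_gt (γd^2 * δ / 2) (|μ x - ν x|) with h | h
    · exact ⟨x, hx, h⟩
    · exact ⟨y, hy, by linarith⟩
  obtain ⟨z, hzs, hz⟩ := hzex
  -- rewrite Dterm in normalized form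
  have harg : ∀ w, μ w / ν w = (u w / v w) * (Qs / Ps) := by
    intro w
    rw [hμdef, hνdef]
    field_simp
  have hDeq : Dterm f u v s
      = Ps * ∑ w : Fin d → α, (if f w = s then μ w * Real.log (μ w / ν w) else 0) := by
    unfold Dterm
    rw [Finset.mul_sum]
    apply Finset.sum_congr rfl
    intro w _
    split
    · rw [harg w]
      have : u w = Ps * μ w := by rw [hμdef]; field_simp
      rw [this]
      ring
    · simp
  -- the normalized masses sum to one over the fiber
  have hsμ : ∑ w : Fin d → α, (if f w = s then μ w else 0) = 1 := by
    have e : ∀ w : Fin d → α, (if f w = s then μ w else 0)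
        = (if f w = s then u w else 0) / Ps := by
      intro w; rw [hμdef]; split <;> simp
    rw [Finset.sum_congr rfl (fun w _ => e w), ← Finset.sum_div]
    have : (∑ w : Fin d → α, if f w = s then u w else 0) = Ps := rfl
    rw [this]
    field_simp
  have hsν : ∑ w : Fin d → α, (if f w = s then ν w else 0) = 1 := by
    have e : ∀ w : Fin d → α, (if f w = s then ν w else 0)
        = (if f w = s then v w else 0) / Qs := by
      intro w; rw [hνdef]; split <;> simp
    rw [Finset.sum_congr rfl (fun w _ => e w), ← Finset.sum_div]
    have : (∑ w : Fin d → α, if f w = s then v w else 0) = Qs := rfl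
    rw [this]
    field_simp
  -- sum of per-atom excesses
  set T : (Fin d → α) → ℝ :=
    fun w => if f w = s then μ w * Real.log (μ w / ν w) - (μ w - ν w) else 0 with hT
  have hTnn : ∀ w, 0 ≤ T w := by
    intro w
    rw [hT]
    dsimp only
    split
    · have := KL_aux_A (hμ0 w) (hν0 w)
      linarith
    · exact le_refl 0
  have hTz : (μ z - ν z)^2/2 ≤ T z := by
    rw [hT]
    dsimp only
    rw [if_pos hzs]
    have := KL_aux_B (hμ0 z) (hμ1 z hzs) (hν0 z) (hν1 z hzs)
    linarith
  have hTsum : (μ z - ν z)^2/2 ≤ ∑ w : Fin d → α, T w :=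
    le_trans hTz (Finset.single_le_sum (fun w _ => hTnn w) (Finset.mem_univ z))
  have hsplit : ∑ w : Fin d → α, (if f w = s then μ w * Real.log (μ w / ν w) else 0)
      = ∑ w : Fin d → α, T w := by
    have e : ∀ w : Fin d → α, (if f w = s then μ w * Real.log (μ w / ν w) else 0)
        = T w + ((if f w = s then μ w else 0) - (if f w = s then ν w else 0)) := by
      intro w; rw [hT]; dsimp only; split <;> simp
    rw [Finset.sum_congr rfl (fun w _ => e w), Finset.sum_add_distrib,
        Finset.sum_sub_distrib, hsμ, hsν]
    ring
  -- final assembly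
  have hPsγ : γd ≤ Ps := le_trans (hu x) (le_pushf (fun w => (hu0 w).le) hx)
  have hsq : γd^4 * δ^2/8 ≤ (μ z - ν z)^2/2 := by
    have h0 : 0 ≤ γd^2 * δ / 2 := by positivity
    nlinarith [abs_nonneg (μ z - ν z), sq_abs (μ z - ν z)]
  rw [hDeq, hsplit]
  have hS : γd^4 * δ^2/8 ≤ ∑ w : Fin d → α, T w := le_trans hsq hTsum
  have h8 : (0:ℝ) ≤ γd^4 * δ^2/8 := by positivity
  calc γd^5 * δ^2/8 = γd * (γd^4 * δ^2/8) := by ring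
  _ ≤ Ps * (γd^4 * δ^2/8) := mul_le_mul_of_nonneg_right hPsγ h8
  _ ≤ Ps * ∑ w : Fin d → α, T w := mul_le_mul_of_nonneg_left hS (lt_of_lt_of_le hγd hPsγ).le

/-- The test point with `k` coordinates equal to `a` and the rest `b`. -/
def testPt {α : Type*} (d : ℕ) (a b : α) (k : ℕ) : Fin d → α :=
  fun i => if (i : ℕ) < k then a else b

lemma card_filter_coe_lt (d k : ℕ) (hk : k ≤ d) :
    ((Finset.univ : Finset (Fin d)).filter fun i : Fin d => (i : ℕ) < k).card = k := by
  rw [Finset.card_filter, Fin.sum_univ_eq_sum_range (fun i => if i < k then (1:ℕ) else 0),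
      ← Finset.card_filter]
  have : (Finset.range d).filter (fun i => i < k) = Finset.range k := by
    ext i; simp only [Finset.mem_filter, Finset.mem_range]; omega
  rw [this, Finset.card_range]

lemma prodPMF_testPt {α : Type*} (d : ℕ) (P : α → ℝ) (a b : α) (k : ℕ) (hk : k ≤ d) :
    prodPMF d P (testPt d a b k) = P a ^ k * P b ^ (d - k) := by
  unfold prodPMF testPt
  simp only [apply_ite P]
  rw [Finset.prod_ite (fun _ => P a) (fun _ => P b)]
  rw [Finset.prod_const, Finset.prod_const, card_filter_coe_lt d k hk]
  congr 2
  have h := Finset.card_filter_add_card_filter_not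
    (s := (Finset.univ : Finset (Fin d))) (p := fun i : Fin d => (i : ℕ) < k)
  rw [card_filter_coe_lt d k hk, Finset.card_univ, Fintype.card_fin] at h
  omega

lemma ratio_pow {ρa ρb δ : ℝ} (hρb : 0 ≤ ρb) (hδ : 0 ≤ δ)
    (h : (1 + δ) * ρb ≤ ρa) (m : ℕ) (hm : 1 ≤ m) :
    (1 + δ) * ρb ^ m ≤ ρa ^ m := by
  have h1 : (1 + δ) ≤ (1 + δ) ^ m := le_self_pow₀ (by linarith) (by omega)
  calc (1 + δ) * ρb ^ m ≤ (1 + δ) ^ m * ρb ^ m := by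
        apply mul_le_mul_of_nonneg_right h1 (pow_nonneg hρb m)
  _ = ((1 + δ) * ρb) ^ m := (mul_pow _ _ _).symm
  _ ≤ ρa ^ m := pow_le_pow_left₀ (by positivity) h m

lemma pow_ratio_ineq {Pa Pb Qa Qb δ : ℝ}
    (hPa : 0 < Pa) (hPb : 0 < Pb) (hQa : 0 < Qa) (hQb : 0 < Qb)
    (hδ : 0 ≤ δ) (hρ : (1 + δ) * (Pb * Qa) ≤ Pa * Qb)
    (i e m : ℕ) (hm : 1 ≤ m) :
    (1 + δ) * (Pa ^ i * Pb ^ (e + m) * (Qa ^ (i + m) * Qb ^ e))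
      ≤ Pa ^ (i + m) * Pb ^ e * (Qa ^ i * Qb ^ (e + m)) := by
  have key := ratio_pow (by positivity) hδ hρ m hm
  have hC0 : (0:ℝ) < Pa ^ i * Pb ^ e * (Qa ^ i * Qb ^ e) := by positivity
  calc (1 + δ) * (Pa ^ i * Pb ^ (e + m) * (Qa ^ (i + m) * Qb ^ e))
      = (Pa ^ i * Pb ^ e * (Qa ^ i * Qb ^ e)) * ((1 + δ) * (Pb * Qa) ^ m) := by
        rw [pow_add, pow_add, mul_pow]; ring
  _ ≤ (Pa ^ i * Pb ^ e * (Qa ^ i * Qb ^ e)) * ((Pa * Qb) ^ m) :=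
        mul_le_mul_of_nonneg_left key hC0.le
  _ = Pa ^ (i + m) * Pb ^ e * (Qa ^ i * Qb ^ (e + m)) := by
        rw [pow_add, pow_add, mul_pow]; ring

/-- Ratio separation between two test points in product form. -/
lemma testPt_ratio {α : Type*} (d : ℕ) (P Q : α → ℝ) {a b : α}
    (hPa : 0 < P a) (hPb : 0 < P b) (hQa : 0 < Q a) (hQb : 0 < Q b)
    {δ : ℝ} (hδ : 0 ≤ δ) (hρ : (1 + δ) * (P b * Q a) ≤ P a * Q b)
    {i j : ℕ} (hij : i < j) (hj : j ≤ d) :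
    (1 + δ) * (prodPMF d P (testPt d a b i) * prodPMF d Q (testPt d a b j))
      ≤ prodPMF d P (testPt d a b j) * prodPMF d Q (testPt d a b i) := by
  obtain ⟨m, hm⟩ : ∃ m, j = i + m := ⟨j - i, by omega⟩
  have hm1 : 1 ≤ m := by omega
  rw [prodPMF_testPt d P a b i (by omega), prodPMF_testPt d P a b j hj,
      prodPMF_testPt d Q a b i (by omega), prodPMF_testPt d Q a b j hj]
  rw [hm, show d - i = (d - (i+m)) + m from by omega]
  exact pow_ratio_ineq hPa hPb hQa hQb hδ hρ i (d - (i+m)) m hm1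

/-- chi-square upper bound on KL. -/
lemma KLf_le_chi {α : Type*} [Fintype α] {P Q : α → ℝ} {γ : ℝ} (hγ : 0 < γ)
    (hP0 : ∀ a, 0 < P a) (hQγ : ∀ a, γ ≤ Q a)
    (hP1 : ∑ a, P a = 1) (hQ1 : ∑ a, Q a = 1) :
    KLf P Q ≤ (∑ a, (P a - Q a)^2) / γ := by
  have hQ0 : ∀ a, 0 < Q a := fun a => lt_of_lt_of_le hγ (hQγ a)
  have step : ∀ a, P a * Real.log (P a / Q a) ≤ (P a - Q a) + (P a - Q a)^2/γ := by
    intro a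
    have h1 := KL_aux_chi (hP0 a) (hQ0 a)
    have h2 : (P a - Q a)^2/(Q a) ≤ (P a - Q a)^2/γ :=
      div_le_div_of_nonneg_left (sq_nonneg _) hγ (hQγ a)
    linarith
  calc KLf P Q ≤ ∑ a, ((P a - Q a) + (P a - Q a)^2/γ) :=
        Finset.sum_le_sum (fun a _ => step a)
  _ = (∑ a, (P a - Q a)) + (∑ a, (P a - Q a)^2)/γ := by
        rw [Finset.sum_add_distrib, Finset.sum_div]
  _ = (∑ a, (P a - Q a)^2) / γ := by
        rw [Finset.sum_sub_distrib, hP1, hQ1]; ring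

end Aux

/-- Restricted strong data processing inequality for discrete functions:
if `|Σ| ≤ d` and `P, Q` have all their masses bounded below by `γ > 0`, then every
function `f : Σ^d → Σ` contracts KL divergence of `d`-fold products by a factor `η < 1`
depending only on `|Σ|`, `γ` and `d`. -/
theorem stmt3 (d : ℕ) (hd : 1 ≤ d) (γ : ℝ) (hγ : 0 < γ)
    (α : Type*) [Fintype α] [DecidableEq α] (hcard : Fintype.card α ≤ d) :
    ∃ η : ℝ, η < 1 ∧
      ∀ f : (Fin d → α) → α, ∀ P Q : α → ℝ,
        (∀ a, γ ≤ P a) → (∑ a, P a) = 1 →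
        (∀ a, γ ≤ Q a) → (∑ a, Q a) = 1 → P ≠ Q →
        KLf (pushf f (prodPMF d P)) (pushf f (prodPMF d Q))
            ≤ η * KLf (prodPMF d P) (prodPMF d Q) ∧
        KLf (prodPMF d P) (prodPMF d Q) = d * KLf P Q := by
  have hd0 : (0:ℝ) < (d:ℝ) := by exact_mod_cast Nat.lt_of_lt_of_le Nat.zero_lt_one hd
  refine ⟨1 - γ^(5*d+1)/(8*(d:ℝ)^4), ?_, ?_⟩
  · have : 0 < γ^(5*d+1)/(8*(d:ℝ)^4) := by positivity
    linarith
  · intro f P Q hP hP1 hQ hQ1 hPQ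
    have hP0 : ∀ a, 0 < P a := fun a => lt_of_lt_of_le hγ (hP a)
    have hQ0 : ∀ a, 0 < Q a := fun a => lt_of_lt_of_le hγ (hQ a)
    have tensor : KLf (prodPMF d P) (prodPMF d Q) = d * KLf P Q :=
      KLf_prodPMF hP0 hQ0 hP1 hQ1 d
    refine ⟨?_, tensor⟩
    -- the alphabet is nonempty
    have huniv : (Finset.univ : Finset α).Nonempty := by
      by_contra h
      rw [Finset.not_nonempty_iff_eq_empty] at h
      rw [h] at hP1
      simp at hP1
    -- choose b maximizing Q - P, with maximum M > 0
    obtain ⟨b, _, hbmax⟩ := Finset.exists_max_image Finset.univ (fun a => Q a - P a) huniv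
    set M := Q b - P b with hMdef
    have hsum0 : ∑ c, (Q c - P c) = 0 := by
      rw [Finset.sum_sub_distrib, hP1, hQ1]; ring
    have hM0 : 0 < M := by
      rcases lt_or_ge 0 M with h | h
      · exact h
      · exfalso
        apply hPQ
        funext a
        have hnn : ∀ c ∈ Finset.univ, 0 ≤ P c - Q c := by
          intro c _
          have := hbmax c (Finset.mem_univ c)
          simp only [hMdef] at this ⊢
          linarith
        have hz : ∑ c, (P c - Q c) = 0 := by
          rw [Finset.sum_sub_distrib, hP1, hQ1]; ring
        have := (Finset.sum_eq_zero_iff_of_nonneg hnn).1 hz a (Finset.mem_univ a)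
        linarith
    -- choose a₀ with Q a₀ ≤ P a₀
    obtain ⟨a₀, ha₀⟩ : ∃ a₀, Q a₀ ≤ P a₀ := by
      by_contra h
      push_neg at h
      have : ∑ a, P a < ∑ a, Q a := Finset.sum_lt_sum_of_nonempty huniv (fun a _ => h a)
      rw [hP1, hQ1] at this
      exact lt_irrefl 1 this
    -- ratio separation at the single-letter level
    have hρ : (1 + M) * (P b * Q a₀) ≤ P a₀ * Q b := by
      have hPb1 : P b ≤ 1 := pmf_le_one hP0 hP1 b
      have h1 : (1 + M) * P b ≤ Q b := by nlinarith [hP0 b]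
      have h2 := mul_le_mul_of_nonneg_right h1 (hQ0 a₀).le
      have h3 := mul_le_mul_of_nonneg_left ha₀ (hQ0 b).le
      nlinarith
    -- pigeonhole: two test points in the same fiber
    obtain ⟨i, j, hij, hjd, hfij⟩ :
        ∃ i j : ℕ, i < j ∧ j ≤ d ∧ f (testPt d a₀ b i) = f (testPt d a₀ b j) := by
      have hlt : Fintype.card α < Fintype.card (Fin (d+1)) := by
        rw [Fintype.card_fin]; omega
      obtain ⟨k, l, hkl, hfe⟩ := Fintype.exists_ne_map_eq_of_card_lt
        (fun k : Fin (d+1) => f (testPt d a₀ b (k : ℕ))) hlt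
      rcases lt_or_gt_of_ne hkl with h | h
      · exact ⟨k, l, h, Fin.is_le l, hfe⟩
      · exact ⟨l, k, h, Fin.is_le k, hfe.symm⟩
    set u := prodPMF d P with hudef
    set v := prodPMF d Q with hvdef
    set s₀ := f (testPt d a₀ b j) with hs₀
    -- lower bound for the conditional term of the good fiber
    have hr : (1 + M) * (u (testPt d a₀ b i) * v (testPt d a₀ b j))
        ≤ u (testPt d a₀ b j) * v (testPt d a₀ b i) :=
      testPt_ratio d P Q (hP0 a₀) (hP0 b) (hQ0 a₀) (hQ0 b) hM0.le hρ hij hjd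
    have hDlow : (γ^d)^5 * M^2/8 ≤ Dterm f u v s₀ :=
      Dterm_lower (by positivity) hM0.le f u v
        (fun w => prodPMF_ge hγ.le hP d w) (fun w => prodPMF_ge hγ.le hQ d w)
        (sum_prodPMF hP1 d) (sum_prodPMF hQ1 d) rfl hfij hr
    -- chain rule
    have hchain := KL_chain f u v (fun x => prodPMF_pos hP0 d x) (fun x => prodPMF_pos hQ0 d x)
    have hDsum : Dterm f u v s₀ ≤ ∑ s, Dterm f u v s :=
      Finset.single_le_sum
        (fun s _ => Dterm_nonneg f u v (fun x => prodPMF_pos hP0 d x)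
          (fun x => prodPMF_pos hQ0 d x) s)
        (Finset.mem_univ s₀)
    -- chi-square upper bound on KL(P, Q)
    have hchi : KLf P Q ≤ (∑ a, (P a - Q a)^2) / γ := KLf_le_chi hγ hP0 hQ hP1 hQ1
    have hdiff : ∀ a, (P a - Q a)^2 ≤ ((d:ℝ)*M)^2 := by
      intro a
      have h1 : Q a - P a ≤ M := hbmax a (Finset.mem_univ a)
      have h2 : P a - Q a ≤ (d:ℝ)*M := by
        have he : ∑ c ∈ Finset.univ.erase a, (Q c - P c) = P a - Q a := by
          have h3 := Finset.add_sum_erase Finset.univ (fun c => Q c - P c) (Finset.mem_univ a)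
          linarith [h3.symm ▸ hsum0, hsum0]
        have hbound : ∑ c ∈ Finset.univ.erase a, (Q c - P c)
            ≤ ((Finset.univ.erase a).card : ℝ) * M := by
          have := Finset.sum_le_card_nsmul (Finset.univ.erase a) (fun c => Q c - P c) M
            (fun c _ => hbmax c (Finset.mem_univ c))
          simpa [nsmul_eq_mul] using this
        have hcard : ((Finset.univ.erase a).card : ℝ) ≤ (d:ℝ) := by
          have h4 : (Finset.univ.erase a).card ≤ Finset.univ.card := Finset.card_erase_le
          have h5 : Finset.univ.card = Fintype.card α := Finset.card_univ
          exact_mod_cast le_trans h4 (h5 ▸ hcard)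
        have h6 : ((Finset.univ.erase a).card : ℝ) * M ≤ (d:ℝ) * M :=
          mul_le_mul_of_nonneg_right hcard hM0.le
        linarith
      have h3 : -((d:ℝ)*M) ≤ P a - Q a := by
        have : (1:ℝ) ≤ (d:ℝ) := by exact_mod_cast hd
        nlinarith
      exact sq_le_sq' h3 h2
    have hchisum : ∑ a, (P a - Q a)^2 ≤ (d:ℝ) * ((d:ℝ)*M)^2 := by
      have := Finset.sum_le_card_nsmul Finset.univ (fun a => (P a - Q a)^2) (((d:ℝ)*M)^2)
        (fun a _ => hdiff a)
      have hcard' : ((Finset.univ : Finset α).card : ℝ) ≤ (d:ℝ) := by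
        rw [Finset.card_univ]; exact_mod_cast hcard
      have h7 : ((Finset.univ : Finset α).card : ℝ) * ((d:ℝ)*M)^2 ≤ (d:ℝ) * ((d:ℝ)*M)^2 :=
        mul_le_mul_of_nonneg_right hcard' (sq_nonneg _)
      calc ∑ a, (P a - Q a)^2 ≤ ((Finset.univ : Finset α).card : ℝ) * ((d:ℝ)*M)^2 := by
            simpa [nsmul_eq_mul] using this
      _ ≤ (d:ℝ) * ((d:ℝ)*M)^2 := h7
    have hKLup : KLf P Q ≤ (d:ℝ)^3 * M^2/γ := by
      have h8 : (∑ a, (P a - Q a)^2)/γ ≤ ((d:ℝ) * ((d:ℝ)*M)^2)/γ := by gcongr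
      have h9 : ((d:ℝ) * ((d:ℝ)*M)^2)/γ = (d:ℝ)^3 * M^2/γ := by ring
      linarith
    -- combine everything
    have h5 : γ^(5*d+1)/(8*(d:ℝ)^3) * KLf P Q
        ≤ γ^(5*d+1)/(8*(d:ℝ)^3) * ((d:ℝ)^3 * M^2/γ) :=
      mul_le_mul_of_nonneg_left hKLup (by positivity)
    have h6 : γ^(5*d+1)/(8*(d:ℝ)^3) * ((d:ℝ)^3 * M^2/γ) = (γ^d)^5 * M^2/8 := by
      rw [show 5*d+1 = d*5+1 from by ring, pow_succ, ← pow_mul]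
      field_simp
    have hηeq : (1 - γ^(5*d+1)/(8*(d:ℝ)^4)) * ((d:ℝ) * KLf P Q)
        = (d:ℝ)*KLf P Q - γ^(5*d+1)/(8*(d:ℝ)^3) * KLf P Q := by
      field_simp
    rw [tensor, hηeq]
    have hfinal : KLf (pushf f u) (pushf f v) = (d:ℝ)*KLf P Q - ∑ s, Dterm f u v s := by
      rw [← tensor, hchain]; ring
    rw [hfinal]
    have : (γ^d)^5 * M^2/8 ≤ ∑ s, Dterm f u v s := le_trans hDlow hDsum
    linarith
end

section
/- Let X ~ P and Y ~ Q be real-valued random variables. Let μ and ν be the restrictions of P and Q to ℝ∖{0}, and suppose μ and ν are mutually absolutely continuous. Let τ := max( ‖dμ/dν − 1‖_∞, ‖dν/dμ − 1‖_∞ ). Then for any p ≥ 1: W_p(X,Y) ≤ τ^{1/p} · ( (E|X|^p)^{1/p} + (E|Y|^p)^{1/p} ). -/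
open MeasureTheory
open scoped ENNReal

lemma aux_sub_one_le (a : ℝ≥0∞) (ha : a ≠ ∞) : a - 1 ≤ (‖a.toReal - 1‖₊ : ℝ≥0∞) := by
  rcases le_or_gt a 1 with h | h
  · simp [tsub_eq_zero_of_le h]
  · have h1 : (1:ℝ) ≤ a.toReal := by
      rw [← ENNReal.toReal_one]
      exact (ENNReal.toReal_le_toReal (by simp) ha).mpr h.le
    calc a - 1 = ENNReal.ofReal (a.toReal - 1) := by
          rw [ENNReal.ofReal_sub _ zero_le_one, ENNReal.ofReal_toReal ha, ENNReal.ofReal_one]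
      _ ≤ _ := Real.ofReal_le_enorm _

lemma aux_mink (ρ : Measure (ℝ × ℝ)) {p : ℝ} (hp : 1 ≤ p) :
    (∫⁻ q, ENNReal.ofReal (|q.1 - q.2| ^ p) ∂ρ) ^ (1/p) ≤
      (∫⁻ x, ENNReal.ofReal (|x| ^ p) ∂(ρ.map Prod.fst)) ^ (1/p) +
      (∫⁻ x, ENNReal.ofReal (|x| ^ p) ∂(ρ.map Prod.snd)) ^ (1/p) := by
  have hp0 : (0:ℝ) ≤ p := le_trans zero_le_one hp
  set F : ℝ × ℝ → ℝ≥0∞ := fun q => ENNReal.ofReal |q.1| with hF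
  set G : ℝ × ℝ → ℝ≥0∞ := fun q => ENNReal.ofReal |q.2| with hG
  have hFm : Measurable F := (measurable_fst.abs).ennreal_ofReal
  have hGm : Measurable G := (measurable_snd.abs).ennreal_ofReal
  have hmono : ∀ q : ℝ × ℝ, ENNReal.ofReal (|q.1 - q.2| ^ p) ≤ ((F + G) q) ^ p := by
    intro q
    rw [← ENNReal.ofReal_rpow_of_nonneg (abs_nonneg _) hp0]
    refine ENNReal.rpow_le_rpow ?_ hp0
    calc ENNReal.ofReal |q.1 - q.2| ≤ ENNReal.ofReal (|q.1| + |q.2|) :=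
          ENNReal.ofReal_le_ofReal (abs_sub _ _)
      _ = F q + G q := ENNReal.ofReal_add (abs_nonneg _) (abs_nonneg _)
  have hmc : Measurable fun x : ℝ => ENNReal.ofReal (|x| ^ p) :=
    ((continuous_abs.rpow_const (fun _ => Or.inr hp0)).measurable).ennreal_ofReal
  calc (∫⁻ q, ENNReal.ofReal (|q.1 - q.2| ^ p) ∂ρ) ^ (1/p)
      ≤ (∫⁻ q, ((F + G) q) ^ p ∂ρ) ^ (1/p) :=
        ENNReal.rpow_le_rpow (lintegral_mono hmono) (by positivity)
    _ ≤ (∫⁻ q, (F q) ^ p ∂ρ) ^ (1/p) + (∫⁻ q, (G q) ^ p ∂ρ) ^ (1/p) :=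
        ENNReal.lintegral_Lp_add_le hFm.aemeasurable hGm.aemeasurable hp
    _ = (∫⁻ x, ENNReal.ofReal (|x| ^ p) ∂(ρ.map Prod.fst)) ^ (1/p) +
        (∫⁻ x, ENNReal.ofReal (|x| ^ p) ∂(ρ.map Prod.snd)) ^ (1/p) := by
        rw [lintegral_map hmc measurable_fst, lintegral_map hmc measurable_snd]
        congr 1 <;> (congr 1; apply lintegral_congr; intro q; rw [ENNReal.ofReal_rpow_of_nonneg (abs_nonneg _) hp0])


/-- The `L^p` Wasserstein distance between two laws on `ℝ`:
`W_p(μ,ν) = (inf over couplings π of ∫ |x−y|^p dπ)^{1/p}`, valued in `ℝ≥0∞`. -/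
noncomputable def Wp (p : ℝ) (μ ν : Measure ℝ) : ℝ≥0∞ :=
  (⨅ (π : Measure (ℝ × ℝ)) (_ : π.map Prod.fst = μ ∧ π.map Prod.snd = ν),
    ∫⁻ q, ENNReal.ofReal (|q.1 - q.2| ^ p) ∂π) ^ (1 / p)

/-- Wasserstein bound from a multiplicative density comparison away from `0`:
if the restrictions `μ, ν` of `P, Q` to `ℝ \ {0}` are mutually absolutely continuous
and `τ = max(‖dμ/dν − 1‖_∞, ‖dν/dμ − 1‖_∞)`, then
`W_p(X,Y) ≤ τ^{1/p} ((E|X|^p)^{1/p} + (E|Y|^p)^{1/p})`. -/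
theorem stmt12 (P Q : Measure ℝ) [IsProbabilityMeasure P] [IsProbabilityMeasure Q]
    (μ ν : Measure ℝ) (hμ : μ = P.restrict ({0}ᶜ)) (hν : ν = Q.restrict ({0}ᶜ))
    (hac1 : μ ≪ ν) (hac2 : ν ≪ μ) (p : ℝ) (hp : 1 ≤ p) :
    Wp p P Q ≤
      (max (eLpNorm (fun x => (μ.rnDeriv ν x).toReal - 1) ⊤ ν)
           (eLpNorm (fun x => (ν.rnDeriv μ x).toReal - 1) ⊤ μ)) ^ (1 / p) *
      ((∫⁻ x, ENNReal.ofReal (|x| ^ p) ∂P) ^ (1 / p) +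
       (∫⁻ x, ENNReal.ofReal (|x| ^ p) ∂Q) ^ (1 / p)) := by
  haveI : IsFiniteMeasure μ := by rw [hμ]; infer_instance
  haveI : IsFiniteMeasure ν := by rw [hν]; infer_instance
  have hp0 : (0:ℝ) ≤ p := le_trans zero_le_one hp
  have hppos : (0:ℝ) < p := lt_of_lt_of_le one_pos hp
  have hs0 : (0:ℝ) ≤ 1/p := by positivity
  set f := μ.rnDeriv ν with hfd
  set f' := ν.rnDeriv μ with hf'd
  have hfm : Measurable f := μ.measurable_rnDeriv ν
  have hf'm : Measurable f' := ν.measurable_rnDeriv μ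
  set τ1 := eLpNorm (fun x => (f x).toReal - 1) ⊤ ν with hτ1
  set τ2 := eLpNorm (fun x => (f' x).toReal - 1) ⊤ μ with hτ2
  set τ := max τ1 τ2 with hτ
  set g : ℝ → ℝ≥0∞ := fun x => min (f x) 1 with hgd
  have hgm : Measurable g := hfm.min measurable_const
  set m0 := ν.withDensity g with hm0
  set μ' := ν.withDensity (f - g) with hμ'
  set ν'' := ν.withDensity (1 - g) with hν''
  have hμeq : μ = m0 + μ' := by
    have hsplit : (fun x => g x + (f - g) x) = f :=
      funext fun x => add_tsub_cancel_of_le (min_le_left _ _)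
    calc μ = ν.withDensity f := (Measure.withDensity_rnDeriv_eq μ ν hac1).symm
      _ = ν.withDensity (fun x => g x + (f - g) x) := by rw [hsplit]
      _ = m0 + μ' := withDensity_add_left hgm _
  have hνeq : ν = m0 + ν'' := by
    have hsplit : (fun x => g x + (1 - g) x) = (1 : ℝ → ℝ≥0∞) :=
      funext fun x => add_tsub_cancel_of_le (min_le_right _ _)
    calc ν = ν.withDensity 1 := (withDensity_one (μ := ν)).symm
      _ = ν.withDensity (fun x => g x + (1 - g) x) := by rw [hsplit]
      _ = m0 + ν'' := withDensity_add_left hgm _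
  set a := min (P {0}) (Q {0}) with ha
  set m : Measure ℝ := m0 + a • Measure.dirac 0 with hm
  set σP : Measure ℝ := μ' + (P {0} - a) • Measure.dirac 0 with hσP
  set σQ : Measure ℝ := ν'' + (Q {0} - a) • Measure.dirac 0 with hσQ
  have hPm : P = m + σP := by
    have h1 : P = μ + P {0} • Measure.dirac 0 := by
      conv_lhs => rw [← Measure.restrict_add_restrict_compl (μ := P)
        (s := {0}) (measurableSet_singleton 0)]
      rw [Measure.restrict_singleton, ← hμ, add_comm]
    have h2 : P {0} • Measure.dirac (0:ℝ) = a • Measure.dirac 0 + (P {0} - a) • Measure.dirac 0 := by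
      rw [← add_smul, add_tsub_cancel_of_le (min_le_left _ _)]
    rw [h1, hμeq, h2, hm, hσP]
    abel
  have hQm : Q = m + σQ := by
    have h1 : Q = ν + Q {0} • Measure.dirac 0 := by
      conv_lhs => rw [← Measure.restrict_add_restrict_compl (μ := Q)
        (s := {0}) (measurableSet_singleton 0)]
      rw [Measure.restrict_singleton, ← hν, add_comm]
    have h2 : Q {0} • Measure.dirac (0:ℝ) = a • Measure.dirac 0 + (Q {0} - a) • Measure.dirac 0 := by
      rw [← add_smul, add_tsub_cancel_of_le (min_le_right _ _)]
    rw [h1, hνeq, h2, hm, hσQ]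
    abel
  have hPuniv : m Set.univ + σP Set.univ = 1 := by
    rw [← Measure.add_apply, ← hPm, measure_univ]
  have hQuniv : m Set.univ + σQ Set.univ = 1 := by
    rw [← Measure.add_apply, ← hQm, measure_univ]
  have hmne : m Set.univ ≠ ∞ := by
    intro h
    rw [h] at hPuniv
    simp at hPuniv
  have hrr : σQ Set.univ = σP Set.univ :=
    ((ENNReal.add_right_inj hmne).mp (hQuniv.trans hPuniv.symm))
  set r := σP Set.univ with hr
  have hr1 : r ≤ 1 := by rw [← hPuniv]; exact le_add_self
  have hrt : r ≠ ∞ := (lt_of_le_of_lt hr1 ENNReal.one_lt_top).ne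
  haveI : IsFiniteMeasure σP := ⟨lt_of_le_of_lt hr1 ENNReal.one_lt_top⟩
  haveI : IsFiniteMeasure σQ := ⟨lt_of_le_of_lt (hrr.le.trans hr1) ENNReal.one_lt_top⟩
  set c : ℝ → ℝ≥0∞ := fun x => ENNReal.ofReal (|x| ^ p) with hc
  have hcm : Measurable c :=
    ((continuous_abs.rpow_const (fun _ => Or.inr hp0)).measurable).ennreal_ofReal
  have hc0 : c 0 = 0 := by
    simp [hc, Real.zero_rpow hppos.ne']
  -- bound for σP
  have hIP : ∫⁻ x, c x ∂σP ≤ τ1 * ∫⁻ x, c x ∂Q := by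
    have h1 : ∫⁻ x, c x ∂σP = ∫⁻ x, c x ∂μ' := by
      rw [hσP, lintegral_add_measure, lintegral_smul_measure, lintegral_dirac' _ hcm, hc0,
        smul_zero, add_zero]
    have h2 : ∫⁻ x, c x ∂μ' = ∫⁻ x, ((f - g) * c) x ∂ν :=
      lintegral_withDensity_eq_lintegral_mul ν (hfm.sub hgm) hcm
    have hae : ∀ᵐ x ∂ν, ((f - g) * c) x ≤ τ1 * c x := by
      have hts : τ1 = essSup (fun x => (‖(f x).toReal - 1‖₊ : ℝ≥0∞)) ν := by
        rw [hτ1, eLpNorm_exponent_top, eLpNormEssSup]; rfl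
      filter_upwards [Measure.rnDeriv_lt_top μ ν,
        ae_le_essSup (f := fun x => (‖(f x).toReal - 1‖₊ : ℝ≥0∞)) (μ := ν)] with x hx hx2
      refine mul_le_mul_left ?_ (c x)
      rw [hts]
      refine le_trans ?_ hx2
      show f x - g x ≤ _
      rcases le_or_gt (f x) 1 with h | h
      · have : g x = f x := min_eq_left h
        rw [this, tsub_self]; exact zero_le
      · have : g x = 1 := min_eq_right h.le
        rw [this]; exact aux_sub_one_le (f x) hx.ne
    calc ∫⁻ x, c x ∂σP = ∫⁻ x, ((f - g) * c) x ∂ν := h1.trans h2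
      _ ≤ ∫⁻ x, τ1 * c x ∂ν := lintegral_mono_ae hae
      _ = τ1 * ∫⁻ x, c x ∂ν := lintegral_const_mul τ1 hcm
      _ ≤ τ1 * ∫⁻ x, c x ∂Q := by
          refine mul_le_mul_right (lintegral_mono' ?_ le_rfl) τ1
          rw [hν]; exact Measure.restrict_le_self
  -- bound for σQ
  have hIQ : ∫⁻ x, c x ∂σQ ≤ τ2 * ∫⁻ x, c x ∂P := by
    have h1 : ∫⁻ x, c x ∂σQ = ∫⁻ x, c x ∂ν'' := by
      rw [hσQ, lintegral_add_measure, lintegral_smul_measure, lintegral_dirac' _ hcm, hc0,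
        smul_zero, add_zero]
    have hg1m : Measurable (1 - g : ℝ → ℝ≥0∞) := measurable_const.sub hgm
    have hν2 : ν'' = μ.withDensity (f' * (1 - g)) := by
      rw [withDensity_mul μ hf'm hg1m,
        Measure.withDensity_rnDeriv_eq ν μ hac2]
    have h2 : ∫⁻ x, c x ∂ν'' = ∫⁻ x, ((f' * (1 - g)) * c) x ∂μ := by
      rw [hν2]
      exact lintegral_withDensity_eq_lintegral_mul μ (hf'm.mul hg1m) hcm
    have hae : ∀ᵐ x ∂μ, ((f' * (1 - g)) * c) x ≤ τ2 * c x := by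
      have hts : τ2 = essSup (fun x => (‖(f' x).toReal - 1‖₊ : ℝ≥0∞)) μ := by
        rw [hτ2, eLpNorm_exponent_top, eLpNormEssSup]; rfl
      filter_upwards [Measure.inv_rnDeriv hac1, Measure.rnDeriv_pos hac1,
        hac1.ae_le (Measure.rnDeriv_lt_top μ ν), Measure.rnDeriv_lt_top ν μ,
        ae_le_essSup (f := fun x => (‖(f' x).toReal - 1‖₊ : ℝ≥0∞)) (μ := μ)] with x hinv hpos hlt hlt' hx2
      refine mul_le_mul_left ?_ (c x)
      rw [hts]
      refine le_trans ?_ hx2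
      show f' x * (1 - g x) ≤ _
      rcases le_or_gt 1 (f x) with h | h
      · have : g x = 1 := min_eq_right h
        rw [this, tsub_self, mul_zero]; exact zero_le
      · have hgx : g x = f x := min_eq_left h.le
        have hinv' : (f x)⁻¹ = f' x := hinv
        rw [hgx, ← hinv']
        have hmul : (f x)⁻¹ * (1 - f x) = (f x)⁻¹ - 1 := by
          rw [ENNReal.mul_sub (fun _ _ => ENNReal.inv_ne_top.mpr hpos.ne'), mul_one,
            ENNReal.inv_mul_cancel hpos.ne' hlt.ne]
        rw [hmul, hinv']
        exact aux_sub_one_le (f' x) hlt'.ne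
    calc ∫⁻ x, c x ∂σQ = ∫⁻ x, ((f' * (1 - g)) * c) x ∂μ := h1.trans h2
      _ ≤ ∫⁻ x, τ2 * c x ∂μ := lintegral_mono_ae hae
      _ = τ2 * ∫⁻ x, c x ∂μ := lintegral_const_mul τ2 hcm
      _ ≤ τ2 * ∫⁻ x, c x ∂P := by
          refine mul_le_mul_right (lintegral_mono' ?_ le_rfl) τ2
          rw [hμ]; exact Measure.restrict_le_self
  have hΔ : Measurable fun x : ℝ => (x, x) := measurable_id.prodMk measurable_id
  have hcostm : Measurable fun q : ℝ × ℝ => ENNReal.ofReal (|q.1 - q.2| ^ p) :=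
    (((continuous_fst.sub continuous_snd).abs.rpow_const
      (fun _ => Or.inr hp0)).measurable).ennreal_ofReal
  have hdiag : ∀ (κ : Measure ℝ), ∫⁻ q, ENNReal.ofReal (|q.1 - q.2| ^ p)
      ∂(κ.map (fun x => (x, x))) = 0 := by
    intro κ
    rw [lintegral_map hcostm hΔ]
    simp [Real.zero_rpow hppos.ne']
  rcases eq_or_ne r 0 with hr0 | hr0
  · -- degenerate case : P = Q
    have hσP0 : σP = 0 := Measure.measure_univ_eq_zero.mp hr0
    have hσQ0 : σQ = 0 := Measure.measure_univ_eq_zero.mp (hrr.trans hr0)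
    have hPQ : P = Q := by rw [hPm, hQm, hσP0, hσQ0]
    have hfst : (P.map (fun x => (x, x))).map Prod.fst = P := by
      rw [Measure.map_map measurable_fst hΔ]; exact Measure.map_id
    have hsnd : (P.map (fun x => (x, x))).map Prod.snd = Q := by
      rw [Measure.map_map measurable_snd hΔ, ← hPQ]; exact Measure.map_id
    have hW : Wp p P Q ≤ 0 := by
      calc Wp p P Q ≤ (∫⁻ q, ENNReal.ofReal (|q.1 - q.2| ^ p)
            ∂(P.map (fun x => (x, x)))) ^ (1/p) :=
          ENNReal.rpow_le_rpow (iInf₂_le _ ⟨hfst, hsnd⟩) hs0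
        _ = 0 := by rw [hdiag, ENNReal.zero_rpow_of_pos (by positivity)]
    exact le_trans hW zero_le
  · set ρ := r⁻¹ • (σP.prod σQ) with hρ
    set π := m.map (fun x => (x, x)) + ρ with hπ
    have hρfst : ρ.map Prod.fst = σP := by
      rw [hρ, Measure.map_smul, Measure.map_fst_prod, hrr, smul_smul,
        ENNReal.inv_mul_cancel hr0 hrt, one_smul]
    have hρsnd : ρ.map Prod.snd = σQ := by
      rw [hρ, Measure.map_smul, Measure.map_snd_prod, smul_smul,
        ENNReal.inv_mul_cancel hr0 hrt, one_smul]
    have hfst : π.map Prod.fst = P := by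
      rw [hπ, Measure.map_add _ _ measurable_fst, Measure.map_map measurable_fst hΔ,
        hρfst]
      rw [show (Prod.fst ∘ fun x : ℝ => (x, x)) = id from rfl, Measure.map_id, ← hPm]
    have hsnd : π.map Prod.snd = Q := by
      rw [hπ, Measure.map_add _ _ measurable_snd, Measure.map_map measurable_snd hΔ,
        hρsnd]
      rw [show (Prod.snd ∘ fun x : ℝ => (x, x)) = id from rfl, Measure.map_id, ← hQm]
    have hcost : ∫⁻ q, ENNReal.ofReal (|q.1 - q.2| ^ p) ∂π
        = ∫⁻ q, ENNReal.ofReal (|q.1 - q.2| ^ p) ∂ρ := by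
      rw [hπ, lintegral_add_measure, hdiag, zero_add]
    calc Wp p P Q ≤ (∫⁻ q, ENNReal.ofReal (|q.1 - q.2| ^ p) ∂π) ^ (1/p) :=
        ENNReal.rpow_le_rpow (iInf₂_le _ ⟨hfst, hsnd⟩) hs0
      _ = (∫⁻ q, ENNReal.ofReal (|q.1 - q.2| ^ p) ∂ρ) ^ (1/p) := by rw [hcost]
      _ ≤ (∫⁻ x, c x ∂(ρ.map Prod.fst)) ^ (1/p) + (∫⁻ x, c x ∂(ρ.map Prod.snd)) ^ (1/p) :=
        aux_mink ρ hp
      _ = (∫⁻ x, c x ∂σP) ^ (1/p) + (∫⁻ x, c x ∂σQ) ^ (1/p) := by rw [hρfst, hρsnd]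
      _ ≤ (τ1 * ∫⁻ x, c x ∂Q) ^ (1/p) + (τ2 * ∫⁻ x, c x ∂P) ^ (1/p) :=
        add_le_add (ENNReal.rpow_le_rpow hIP hs0) (ENNReal.rpow_le_rpow hIQ hs0)
      _ ≤ (τ * ∫⁻ x, c x ∂Q) ^ (1/p) + (τ * ∫⁻ x, c x ∂P) ^ (1/p) :=
        add_le_add
          (ENNReal.rpow_le_rpow (mul_le_mul_left (le_max_left _ _) _) hs0)
          (ENNReal.rpow_le_rpow (mul_le_mul_left (le_max_right _ _) _) hs0)
      _ = τ ^ (1/p) * ((∫⁻ x, c x ∂P) ^ (1/p) + (∫⁻ x, c x ∂Q) ^ (1/p)) := by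
        rw [ENNReal.mul_rpow_of_nonneg _ _ hs0, ENNReal.mul_rpow_of_nonneg _ _ hs0,
          ← mul_add, add_comm]
end

section
/- Let a_u, b_v be functions on arbitrary sets U, V taking values in [−1,1], and let P_U, P_V be probability distributions under which a_U, b_V have zero mean and equal variance, and under which a_U and b_V are symmetric random variables (a_U has the same distribution as −a_U, likewise b_V). Define S̄ := a_Ū + b_V̄ with (Ū,V̄) ~ P_U × P_V, and Ŝ := (a_Û + b_V̂)/(1 + a_Û b_V̂) where (Û,V̂) has density P_U(u)P_V(v)(1 + a_u b_v). Then E[S̄²]·(1 − E[S̄²]/2) ≤ E[Ŝ²] ≤ E[S̄²]·(1 − E[S̄²]/4). -/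
open MeasureTheory
open scoped ENNReal



noncomputable def hfun (x y : ℝ) : ℝ := (1 + x*y) * ((x+y)/(1+x*y))^2

lemma hfun_meas : Measurable (fun p : ℝ × ℝ => hfun p.1 p.2) := by
  unfold hfun
  fun_prop

lemma hfun_nonneg {x y : ℝ} (hx : x ∈ Set.Icc (-1:ℝ) 1) (hy : y ∈ Set.Icc (-1:ℝ) 1) :
    0 ≤ hfun x y := by
  obtain ⟨hx1, hx2⟩ := hx; obtain ⟨hy1, hy2⟩ := hy
  have : (0:ℝ) ≤ 1 + x*y := by nlinarith
  exact mul_nonneg this (sq_nonneg _)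

lemma hfun_le_two {x y : ℝ} (hx : x ∈ Set.Icc (-1:ℝ) 1) (hy : y ∈ Set.Icc (-1:ℝ) 1) :
    hfun x y ≤ 2 := by
  obtain ⟨hx1, hx2⟩ := hx; obtain ⟨hy1, hy2⟩ := hy
  rcases eq_or_lt_of_le (by nlinarith : (0:ℝ) ≤ 1 + x*y) with h0 | h0
  · simp [hfun, ← h0]
  · have hd : hfun x y = (x+y)^2 / (1+x*y) := by
      unfold hfun; field_simp
    rw [hd, div_le_iff₀ h0]; nlinarith

lemma hfun_sandwich {x y : ℝ} (hx : x ∈ Set.Icc (-1:ℝ) 1) (hy : y ∈ Set.Icc (-1:ℝ) 1) :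
    x^2 + y^2 - 2*(x^2*y^2) ≤ (hfun x y + hfun (-x) y)/2 ∧
    (hfun x y + hfun (-x) y)/2 ≤ x^2 + y^2 - x^2*y^2 := by
  obtain ⟨hx1, hx2⟩ := hx; obtain ⟨hy1, hy2⟩ := hy
  have hc : (0:ℝ) ≤ 1 + x*y := by nlinarith
  have hd : (0:ℝ) ≤ 1 - x*y := by nlinarith
  rcases eq_or_lt_of_le hc with h0 | h0
  · -- x*y = -1, so x^2 = y^2 = 1
    have hxy : x*y = -1 := by linarith
    have hx2' : x^2 = 1 := by nlinarith [mul_nonneg (sq_nonneg x) (by nlinarith : (0:ℝ) ≤ 1 - y^2), sq_nonneg (x*y)]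
    have hy2' : y^2 = 1 := by nlinarith [mul_nonneg (sq_nonneg y) (by nlinarith : (0:ℝ) ≤ 1 - x^2), sq_nonneg (x*y)]
    have e1 : hfun x y = 0 := by simp [hfun, ← h0]
    have e2 : hfun (-x) y = 2 := by
      unfold hfun
      rw [show (1 + (-x)*y : ℝ) = 2 by rw [neg_mul]; linarith]
      nlinarith
    rw [e1, e2]; constructor <;> nlinarith
  rcases eq_or_lt_of_le hd with h0' | h0'
  · have hxy : x*y = 1 := by linarith
    have hx2' : x^2 = 1 := by nlinarith [mul_nonneg (sq_nonneg x) (by nlinarith : (0:ℝ) ≤ 1 - y^2), sq_nonneg (x*y)]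
    have hy2' : y^2 = 1 := by nlinarith [mul_nonneg (sq_nonneg y) (by nlinarith : (0:ℝ) ≤ 1 - x^2), sq_nonneg (x*y)]
    have e2 : hfun (-x) y = 0 := by
      unfold hfun
      rw [show (1 + (-x)*y : ℝ) = 0 by rw [neg_mul]; linarith]
      simp
    have e1 : hfun x y = 2 := by
      unfold hfun; rw [show (1 + x*y : ℝ) = 2 by linarith]; nlinarith
    rw [e1, e2]; constructor <;> nlinarith
  · have e1 : hfun x y = (x+y)^2 / (1+x*y) := by unfold hfun; field_simp
    have e2 : hfun (-x) y = (y-x)^2 / (1-x*y) := by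
      unfold hfun
      rw [show 1 + (-x)*y = 1 - x*y by ring]
      field_simp; ring
    have key : (hfun x y + hfun (-x) y)/2
        = (x^2 + y^2 - 2*(x^2*y^2)) / ((1+x*y)*(1-x*y)) := by
      rw [e1, e2]; field_simp; ring
    have hprod : (0:ℝ) < (1+x*y)*(1-x*y) := mul_pos h0 h0'
    have hbx : (0:ℝ) ≤ 1 - x^2 := by nlinarith
    have hby : (0:ℝ) ≤ 1 - y^2 := by nlinarith
    have hs : (0:ℝ) ≤ x^2 + y^2 - 2*(x^2*y^2) := by
      nlinarith [mul_nonneg (sq_nonneg x) hby, mul_nonneg (sq_nonneg y) hbx]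
    constructor
    · rw [key, le_div_iff₀ hprod]
      have id1 : (x^2 + y^2 - 2*(x^2*y^2)) - (x^2 + y^2 - 2*(x^2*y^2)) * ((1+x*y)*(1-x*y))
          = (x^2 + y^2 - 2*(x^2*y^2)) * (x*y)^2 := by ring
      linarith [mul_nonneg hs (sq_nonneg (x*y))]
    · rw [key, div_le_iff₀ hprod]
      have id2 : (x^2 + y^2 - x^2*y^2) * ((1+x*y)*(1-x*y)) - (x^2 + y^2 - 2*(x^2*y^2))
          = (x*y)^2 * ((1-x^2)*(1-y^2)) := by ring
      linarith [mul_nonneg (sq_nonneg (x*y)) (mul_nonneg hbx hby)]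

/-- Two-sided second moment estimate for the BP-type combination:
if `a_U`, `b_V` are `[-1,1]`-valued, symmetric, with zero mean and equal variance,
and `S̄ = a + b` under the product measure while `Ŝ = (a+b)/(1+ab)` under the tilted
measure `P_U P_V (1 + ab)`, then
`E[S̄²](1 − E[S̄²]/2) ≤ E[Ŝ²] ≤ E[S̄²](1 − E[S̄²]/4)`. -/
theorem stmt14 {U V : Type*} [MeasurableSpace U] [MeasurableSpace V]
    (PU : Measure U) (PV : Measure V)
    [IsProbabilityMeasure PU] [IsProbabilityMeasure PV]
    (a : U → ℝ) (b : V → ℝ) (ha : Measurable a) (hb : Measurable b)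
    (har : ∀ u, a u ∈ Set.Icc (-1 : ℝ) 1) (hbr : ∀ v, b v ∈ Set.Icc (-1 : ℝ) 1)
    (hma : (∫ u, a u ∂PU) = 0) (hmb : (∫ v, b v ∂PV) = 0)
    (hvar : (∫ u, (a u) ^ 2 ∂PU) = ∫ v, (b v) ^ 2 ∂PV)
    (hsymA : PU.map a = PU.map (fun u => -a u))
    (hsymB : PV.map b = PV.map (fun v => -b v)) :
    (∫ w : U × V, (a w.1 + b w.2) ^ 2 ∂(PU.prod PV)) *
        (1 - (∫ w : U × V, (a w.1 + b w.2) ^ 2 ∂(PU.prod PV)) / 2)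
      ≤ (∫ w : U × V, ((a w.1 + b w.2) / (1 + a w.1 * b w.2)) ^ 2
          ∂((PU.prod PV).withDensity (fun w => ENNReal.ofReal (1 + a w.1 * b w.2)))) ∧
    (∫ w : U × V, ((a w.1 + b w.2) / (1 + a w.1 * b w.2)) ^ 2
          ∂((PU.prod PV).withDensity (fun w => ENNReal.ofReal (1 + a w.1 * b w.2))))
      ≤ (∫ w : U × V, (a w.1 + b w.2) ^ 2 ∂(PU.prod PV)) *
        (1 - (∫ w : U × V, (a w.1 + b w.2) ^ 2 ∂(PU.prod PV)) / 4) := by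
  have hA : Measurable fun w : U × V => a w.1 := ha.comp measurable_fst
  have hB : Measurable fun w : U × V => b w.2 := hb.comp measurable_snd
  set μ := PU.prod PV with hμdef
  have hdens : ∀ w : U × V, (0:ℝ) ≤ 1 + a w.1 * b w.2 := by
    intro w
    obtain ⟨h1,h2⟩ := har w.1; obtain ⟨h3,h4⟩ := hbr w.2
    nlinarith
  -- rewrite the tilted integral
  have htilt : (∫ w : U × V, ((a w.1 + b w.2) / (1 + a w.1 * b w.2)) ^ 2
          ∂(μ.withDensity (fun w => ENNReal.ofReal (1 + a w.1 * b w.2))))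
      = ∫ w, hfun (a w.1) (b w.2) ∂μ := by
    have hmeas : Measurable fun w : U × V => (1 + a w.1 * b w.2).toNNReal :=
      (measurable_const.add (hA.mul hB)).real_toNNReal
    rw [show (fun w : U × V => ENNReal.ofReal (1 + a w.1 * b w.2))
        = fun w => ((1 + a w.1 * b w.2).toNNReal : ℝ≥0∞) from rfl,
      integral_withDensity_eq_integral_smul hmeas]
    congr 1; funext w
    rw [NNReal.smul_def, smul_eq_mul, Real.coe_toNNReal _ (hdens w)]
    rfl
  -- symmetry
  have hsym : ∫ w, hfun (a w.1) (b w.2) ∂μ = ∫ w, hfun (-(a w.1)) (b w.2) ∂μ := by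
    have h1 : ∫ w, hfun (a w.1) (b w.2) ∂μ
        = ∫ p : ℝ × ℝ, hfun p.1 p.2 ∂((PU.map a).prod (PV.map b)) := by
      rw [Measure.map_prod_map _ _ ha hb,
        integral_map (f := fun p : ℝ × ℝ => hfun p.1 p.2)
          ((ha.prodMap hb).aemeasurable) hfun_meas.aestronglyMeasurable]
      rfl
    have h2 : ∫ w, hfun (-(a w.1)) (b w.2) ∂μ
        = ∫ p : ℝ × ℝ, hfun p.1 p.2 ∂((PU.map fun u => -a u).prod (PV.map b)) := by
      rw [Measure.map_prod_map _ _ (show Measurable fun u => -a u from ha.neg) hb,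
        integral_map (f := fun p : ℝ × ℝ => hfun p.1 p.2)
          (((show Measurable fun u => -a u from ha.neg).prodMap hb).aemeasurable) hfun_meas.aestronglyMeasurable]
      rfl
    rw [h1, h2, hsymA]
  -- integrability helper
  have key_int : ∀ (G : U × V → ℝ), Measurable G → ∀ C : ℝ, (∀ w, |G w| ≤ C) →
      Integrable G μ := fun G hG C hC =>
    ⟨hG.aestronglyMeasurable,
      HasFiniteIntegral.of_bounded (C := C) (Filter.Eventually.of_forall fun w => by
        simpa using hC w)⟩
  have harn : ∀ u, (-a u) ∈ Set.Icc (-1:ℝ) 1 := by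
    intro u; obtain ⟨h1,h2⟩ := har u; exact ⟨by linarith, by linarith⟩
  have iH1 : Integrable (fun w : U × V => hfun (a w.1) (b w.2)) μ := by
    refine key_int _ (hfun_meas.comp (hA.prodMk hB)) 2 fun w => ?_
    rw [abs_le]
    refine ⟨le_trans (by norm_num) (hfun_nonneg (har w.1) (hbr w.2)),
      hfun_le_two (har w.1) (hbr w.2)⟩
  have iH2 : Integrable (fun w : U × V => hfun (-(a w.1)) (b w.2)) μ := by
    refine key_int _ (hfun_meas.comp ((hA.neg).prodMk hB)) 2 fun w => ?_
    rw [abs_le]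
    refine ⟨le_trans (by norm_num) (hfun_nonneg (harn w.1) (hbr w.2)),
      hfun_le_two (harn w.1) (hbr w.2)⟩
  have habs : ∀ u, |a u| ≤ 1 := fun u => abs_le.2 (har u)
  have hbabs : ∀ v, |b v| ≤ 1 := fun v => abs_le.2 (hbr v)
  have iA2 : Integrable (fun w : U × V => (a w.1)^2) μ := by
    refine key_int _ (hA.pow_const 2) 1 fun w => ?_
    rw [abs_pow]
    calc |a w.1|^2 ≤ 1^2 := pow_le_pow_left₀ (abs_nonneg _) (habs w.1) 2
    _ = 1 := one_pow 2
  have iB2 : Integrable (fun w : U × V => (b w.2)^2) μ := by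
    refine key_int _ (hB.pow_const 2) 1 fun w => ?_
    rw [abs_pow]
    calc |b w.2|^2 ≤ 1^2 := pow_le_pow_left₀ (abs_nonneg _) (hbabs w.2) 2
    _ = 1 := one_pow 2
  have iAB : Integrable (fun w : U × V => a w.1 * b w.2) μ := by
    refine key_int _ (hA.mul hB) 1 fun w => ?_
    rw [abs_mul]
    exact mul_le_one₀ (habs w.1) (abs_nonneg _) (hbabs w.2)
  have iAB2 : Integrable (fun w : U × V => (a w.1)^2 * (b w.2)^2) μ := by
    refine key_int _ ((hA.pow_const 2).mul (hB.pow_const 2)) 1 fun w => ?_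
    rw [abs_mul, abs_pow, abs_pow]
    have h1 : |a w.1|^2 ≤ 1 := by
      calc |a w.1|^2 ≤ 1^2 := pow_le_pow_left₀ (abs_nonneg _) (habs w.1) 2
      _ = 1 := one_pow 2
    have h2 : |b w.2|^2 ≤ 1 := by
      calc |b w.2|^2 ≤ 1^2 := pow_le_pow_left₀ (abs_nonneg _) (hbabs w.2) 2
      _ = 1 := one_pow 2
    exact mul_le_one₀ h1 (by positivity) h2
  have iSum : Integrable (fun w : U × V => (a w.1)^2 + (b w.2)^2) μ := iA2.add iB2
  -- moments
  set σ := ∫ u, (a u)^2 ∂PU with hσdef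
  have mA2 : ∫ w, (a w.1)^2 ∂μ = σ := by
    have h := integral_prod_mul (μ := PU) (ν := PV) (fun u => (a u)^2) (fun _ => (1:ℝ))
    simpa using h
  have mB2 : ∫ w, (b w.2)^2 ∂μ = σ := by
    have h := integral_prod_mul (μ := PU) (ν := PV) (fun _ => (1:ℝ)) (fun v => (b v)^2)
    simpa [← hvar] using h
  have mAB2 : ∫ w, (a w.1)^2 * (b w.2)^2 ∂μ = σ * σ := by
    have h := integral_prod_mul (μ := PU) (ν := PV) (fun u => (a u)^2) (fun v => (b v)^2)
    rw [h, ← hvar, ← hσdef]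
  have mAB : ∫ w, a w.1 * b w.2 ∂μ = 0 := by
    have h := integral_prod_mul (μ := PU) (ν := PV) a b
    rw [h, hma, zero_mul]
  have ES : ∫ w, (a w.1 + b w.2)^2 ∂μ = 2 * σ := by
    have hrw : (fun w : U × V => (a w.1 + b w.2)^2)
        = fun w => ((a w.1)^2 + (b w.2)^2) + 2 * (a w.1 * b w.2) := by
      funext w; ring
    rw [hrw, integral_add iSum (iAB.const_mul 2), integral_add iA2 iB2,
      integral_const_mul _ _, mA2, mB2, mAB]
    ring
  set I := ∫ w, hfun (a w.1) (b w.2) ∂μ with hIdef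
  have hI2 : I = ∫ w, (hfun (a w.1) (b w.2) + hfun (-(a w.1)) (b w.2))/2 ∂μ := by
    rw [integral_div, integral_add iH1 iH2, ← hsym, ← hIdef]
    ring
  have lowI : ∫ w, ((a w.1)^2 + (b w.2)^2 - 2 * ((a w.1)^2 * (b w.2)^2)) ∂μ ≤ I := by
    rw [hI2]
    refine integral_mono ((iA2.add iB2).sub (iAB2.const_mul 2)) ((iH1.add iH2).div_const 2)
      fun w => ?_
    have := (hfun_sandwich (har w.1) (hbr w.2)).1
    simpa [mul_assoc] using this
  have highI : I ≤ ∫ w, ((a w.1)^2 + (b w.2)^2 - (a w.1)^2 * (b w.2)^2) ∂μ := by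
    rw [hI2]
    refine integral_mono ((iH1.add iH2).div_const 2) ((iA2.add iB2).sub iAB2)
      fun w => ?_
    exact (hfun_sandwich (har w.1) (hbr w.2)).2
  have lowval : ∫ w, ((a w.1)^2 + (b w.2)^2 - 2 * ((a w.1)^2 * (b w.2)^2)) ∂μ
      = 2*σ - 2*(σ*σ) := by
    rw [integral_sub iSum (iAB2.const_mul 2), integral_add iA2 iB2,
      integral_const_mul _ _, mA2, mB2, mAB2]
    ring
  have highval : ∫ w, ((a w.1)^2 + (b w.2)^2 - (a w.1)^2 * (b w.2)^2) ∂μ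
      = 2*σ - σ*σ := by
    rw [integral_sub iSum iAB2, integral_add iA2 iB2, mA2, mB2, mAB2]
    ring
  rw [htilt, ES]
  constructor
  · rw [show (2*σ) * (1 - 2*σ/2) = 2*σ - 2*(σ*σ) by ring, ← lowval]
    exact lowI
  · rw [show (2*σ) * (1 - 2*σ/4) = 2*σ - σ*σ by ring, ← highval]
    exact highI
end
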